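/- Any reflection subgroup of a dihedral reflection subgroup ⟨r_a, r_b⟩ of W, where (a,b) ≤ -1, has at most 2 canonical generators. -/

import Mathlib

open Real

variable {V : Type*} [AddCommGroup V] [Module ℝ V]

/-- The set of positive linear combinations of a set `A`. -/
def PLC (A : Set V) : Set V :=
  {v | ∃ (s : Finset V) (c : V → ℝ), (↑s : Set V) ⊆ A ∧ (∀ x ∈ s, 0 ≤ c x) ∧
    (∃ x ∈ s, 0 < c x) ∧ v = ∑ x ∈ s, c x • x}

/-- A Coxeter datum (Krammer): a root basis `Pi` in `V` with bilinear form `B`. -/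
structure CoxeterDatum (V : Type*) [AddCommGroup V] [Module ℝ V] where
  B : LinearMap.BilinForm ℝ V
  Pi : Set V
  norm_one : ∀ a ∈ Pi, B a a = 1
  symm : ∀ a ∈ Pi, ∀ b ∈ Pi, B a b = B b a
  offdiag : ∀ a ∈ Pi, ∀ b ∈ Pi, a ≠ b →
    (∃ m : ℕ, 2 ≤ m ∧ B a b = -Real.cos (Real.pi / m)) ∨ B a b ≤ -1
  zero_not_plc : (0 : V) ∉ PLC Pi

namespace CoxeterDatum

variable (D : CoxeterDatum V)

/-- The reflection in the vector `a`, as a linear endomorphism of `V`. -/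
noncomputable def refl (a : V) : Module.End ℝ V where
  toFun x := x - (2 * D.B x a) • a
  map_add' x y := by simp only [map_add, LinearMap.add_apply]; module
  map_smul' c x := by simp only [map_smul, LinearMap.smul_apply, smul_eq_mul,
    RingHom.id_apply]; module

/-- The set of simple reflections, as invertible endomorphisms of `V`. -/
def simples : Set (Module.End ℝ V)ˣ :=
  {u | ∃ a ∈ D.Pi, (u : Module.End ℝ V) = D.refl a}

/-- The Coxeter group `W`, realized as the group generated by the simple reflections. -/
noncomputable def Wgrp : Subgroup (Module.End ℝ V)ˣ := Subgroup.closure D.simples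

/-- The root system. -/
def roots : Set V :=
  {x | ∃ w ∈ D.Wgrp, ∃ a ∈ D.Pi, x = (w : Module.End ℝ V) a}

/-- The positive roots. -/
def posRoots : Set V := D.roots ∩ PLC D.Pi

/-- The negative roots. -/
def negRoots : Set V := {x | -x ∈ D.posRoots}

/-- The length of an element of `W` with respect to the simple reflections. -/
noncomputable def len (w : (Module.End ℝ V)ˣ) : ℕ :=
  sInf {n | ∃ l : List (Module.End ℝ V)ˣ,
    l.length = n ∧ (∀ u ∈ l, u ∈ D.simples) ∧ l.prod = w}

/-- The depth of a root. -/
noncomputable def dp (x : V) : ℕ :=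
  sInf {n | ∃ w ∈ D.Wgrp, D.len w = n ∧ (w : Module.End ℝ V) x ∈ D.negRoots}

/-- Dominance: `x` dominates `y` if every `w ∈ W` making `x` negative makes `y` negative. -/
def dom (x y : V) : Prop :=
  ∀ w ∈ D.Wgrp, (w : Module.End ℝ V) x ∈ D.negRoots → (w : Module.End ℝ V) y ∈ D.negRoots

/-- `D(x)`: the set of positive roots other than `x` dominated by `x`. -/
def DSet (x : V) : Set V := {y | y ∈ D.posRoots ∧ y ≠ x ∧ D.dom x y}

/-- `D_n`: the set of positive roots dominating exactly `n` other positive roots. -/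
def Dn (n : ℕ) : Set V :=
  {x | x ∈ D.posRoots ∧ (D.DSet x).Finite ∧ (D.DSet x).ncard = n}

/-- The set of reflections of `W`. -/
def TSet : Set (Module.End ℝ V)ˣ :=
  {t | ∃ w ∈ D.Wgrp, ∃ s ∈ D.simples, t = w * s * w⁻¹}

/-- `N(w)`: the set of positive roots sent to negative roots by `w`. -/
def NSet (w : (Module.End ℝ V)ˣ) : Set V :=
  {z | z ∈ D.posRoots ∧ (w : Module.End ℝ V) z ∈ D.negRoots}

/-- `N̄(w)`: the reflections `t` with `ℓ(wt) < ℓ(w)`. -/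
def Nbar (w : (Module.End ℝ V)ˣ) : Set (Module.End ℝ V)ˣ :=
  {t | t ∈ D.TSet ∧ D.len (w * t) < D.len w}

/-- The canonical generators of a reflection subgroup `W'`. -/
def canGens (W' : Subgroup (Module.End ℝ V)ˣ) : Set (Module.End ℝ V)ˣ :=
  {t | t ∈ D.TSet ∧ D.Nbar t ∩ (W' : Set (Module.End ℝ V)ˣ) = {t}}

/-- `S(x)`: elements of `W` of minimal length sending `x` into `Π` (inverse-wise). -/
def SSet (x : V) : Set (Module.End ℝ V)ˣ :=
  {w | w ∈ D.Wgrp ∧ D.len w = D.dp x - 1 ∧ ((w⁻¹ : (Module.End ℝ V)ˣ) : Module.End ℝ V) x ∈ D.Pi}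

end CoxeterDatum

section AuxProof

namespace CoxeterDatum

open Module

variable {V : Type*} [AddCommGroup V] [Module ℝ V]

theorem PLC.of_mem {A : Set V} {x : V} (hx : x ∈ A) : x ∈ PLC A := by
  classical
  exact ⟨{x}, fun _ => 1, by simpa using hx, fun _ _ => zero_le_one,
    ⟨x, Finset.mem_singleton_self x, one_pos⟩, by simp⟩

theorem PLC.add {A : Set V} {u v : V} (hu : u ∈ PLC A) (hv : v ∈ PLC A) :
    u + v ∈ PLC A := by
  classical
  obtain ⟨s, c, hsA, hc0, ⟨x0, hx0s, hx0⟩, rfl⟩ := hu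
  obtain ⟨t, d, htA, hd0, -, rfl⟩ := hv
  refine ⟨s ∪ t, fun x => (if x ∈ s then c x else 0) + (if x ∈ t then d x else 0),
    ?_, ?_, ?_, ?_⟩
  · intro x hx
    rcases Finset.mem_union.1 (Finset.mem_coe.1 hx) with h | h
    exacts [hsA (Finset.mem_coe.2 h), htA (Finset.mem_coe.2 h)]
  · intro x _
    have h1 : (0:ℝ) ≤ if x ∈ s then c x else 0 := by
      split_ifs with h; exacts [hc0 x h, le_rfl]
    have h2 : (0:ℝ) ≤ if x ∈ t then d x else 0 := by
      split_ifs with h; exacts [hd0 x h, le_rfl]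
    show (0:ℝ) ≤ (if x ∈ s then c x else 0) + (if x ∈ t then d x else 0)
    linarith
  · refine ⟨x0, Finset.mem_union_left _ hx0s, ?_⟩
    have h2 : (0:ℝ) ≤ if x0 ∈ t then d x0 else 0 := by
      split_ifs with h; exacts [hd0 x0 h, le_rfl]
    show (0:ℝ) < (if x0 ∈ s then c x0 else 0) + (if x0 ∈ t then d x0 else 0)
    rw [if_pos hx0s]; linarith
  · have hs : ∑ x ∈ s, c x • x = ∑ x ∈ s ∪ t, (if x ∈ s then c x else 0) • x := by
      simp only [ite_smul, zero_smul, Finset.sum_ite_mem, Finset.union_inter_cancel_left]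
    have ht : ∑ x ∈ t, d x • x = ∑ x ∈ s ∪ t, (if x ∈ t then d x else 0) • x := by
      simp only [ite_smul, zero_smul, Finset.sum_ite_mem, Finset.union_inter_cancel_right]
    rw [hs, ht, ← Finset.sum_add_distrib]
    refine Finset.sum_congr rfl fun x _ => ?_
    rw [add_smul]

theorem PLC.smul {A : Set V} {u : V} {r : ℝ} (hr : 0 < r) (hu : u ∈ PLC A) :
    r • u ∈ PLC A := by
  obtain ⟨s, c, hsA, hc0, ⟨x0, hx0s, hx0⟩, rfl⟩ := hu
  refine ⟨s, fun x => r * c x, hsA, fun x hx => mul_nonneg hr.le (hc0 x hx),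
    ⟨x0, hx0s, mul_pos hr hx0⟩, ?_⟩
  rw [Finset.smul_sum]
  refine Finset.sum_congr rfl fun x _ => ?_
  rw [smul_smul]

theorem PLC.combo {A : Set V} {u v : V} {lam mu : ℝ} (hu : u ∈ PLC A) (hv : v ∈ PLC A)
    (hl : 0 ≤ lam) (hm : 0 ≤ mu) (hne : 0 < lam ∨ 0 < mu) :
    lam • u + mu • v ∈ PLC A := by
  rcases eq_or_lt_of_le hl with h | h
  · rcases hne with h' | h'
    · exact absurd h' (by rw [← h]; exact lt_irrefl 0)
    · rw [← h, zero_smul, zero_add]; exact PLC.smul h' hv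
  · rcases eq_or_lt_of_le hm with h' | h'
    · rw [← h', zero_smul, add_zero]; exact PLC.smul h hu
    · exact PLC.add (PLC.smul h hu) (PLC.smul h' hv)

variable (D : CoxeterDatum V)

theorem no_pos_neg {u : V} (hu : u ∈ PLC D.Pi) (hnu : -u ∈ PLC D.Pi) : False :=
  D.zero_not_plc (by simpa using PLC.add hu hnu)

theorem refl_apply (a x : V) : D.refl a x = x - (2 * D.B x a) • a := rfl

theorem refl_neg (γ : V) : D.refl (-γ) = D.refl γ := by
  apply LinearMap.ext; intro x
  simp only [refl_apply, map_neg, smul_neg, neg_smul, mul_neg, neg_neg]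

theorem refl_self {a : V} (h : D.B a a = 1) : D.refl a a = -a := by
  rw [refl_apply, h]; module

theorem refl_refl {a : V} (h : D.B a a = 1) (x : V) : D.refl a (D.refl a x) = x := by
  simp only [refl_apply, map_sub, map_smul, LinearMap.sub_apply, LinearMap.smul_apply,
    smul_eq_mul, h]
  module

theorem refl_mul_self {a : V} (h : D.B a a = 1) : D.refl a * D.refl a = 1 :=
  LinearMap.ext fun x => by
    rw [Module.End.mul_apply, refl_refl D h, Module.End.one_apply]

theorem unit_mul_self {u : (Module.End ℝ V)ˣ} {a : V} (hu : (u : Module.End ℝ V) = D.refl a)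
    (h : D.B a a = 1) : u * u = 1 :=
  Units.ext (by rw [Units.val_mul, hu, refl_mul_self D h, Units.val_one])

theorem unit_inv_eq {u : (Module.End ℝ V)ˣ} {a : V} (hu : (u : Module.End ℝ V) = D.refl a)
    (h : D.B a a = 1) : u⁻¹ = u :=
  inv_eq_of_mul_eq_one_right (D.unit_mul_self hu h)

theorem simple_sq {s : (Module.End ℝ V)ˣ} (hs : s ∈ D.simples) : s * s = 1 := by
  obtain ⟨a, ha, hcoe⟩ := hs
  exact D.unit_mul_self hcoe (D.norm_one a ha)

theorem simple_inv {s : (Module.End ℝ V)ˣ} (hs : s ∈ D.simples) : s⁻¹ = s := by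
  obtain ⟨a, ha, hcoe⟩ := hs
  exact D.unit_inv_eq hcoe (D.norm_one a ha)

/-- the reflection in `a` as a unit. -/
noncomputable def rUnit (a : V) (h : D.B a a = 1) : (Module.End ℝ V)ˣ where
  val := D.refl a
  inv := D.refl a
  val_inv := D.refl_mul_self h
  inv_val := D.refl_mul_self h

theorem rUnit_coe (a : V) (h : D.B a a = 1) : ((D.rUnit a h : (Module.End ℝ V)ˣ) : Module.End ℝ V) = D.refl a := rfl

theorem rUnit_mem_simples {a : V} (ha : a ∈ D.Pi) :
    D.rUnit a (D.norm_one a ha) ∈ D.simples := ⟨a, ha, rfl⟩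

theorem bsymm1 {a : V} (ha : a ∈ D.Pi) {y : V} (hy : y ∈ Submodule.span ℝ D.Pi) :
    D.B a y = D.B y a := by
  induction hy using Submodule.span_induction with
  | mem z hz => exact D.symm a ha z hz
  | zero => simp
  | add y z _ _ h1 h2 =>
      simp only [map_add, LinearMap.add_apply, h1, h2]
  | smul r y _ h =>
      simp only [map_smul, LinearMap.smul_apply, smul_eq_mul, h]

theorem bsymm {x y : V} (hx : x ∈ Submodule.span ℝ D.Pi) (hy : y ∈ Submodule.span ℝ D.Pi) :
    D.B x y = D.B y x := by
  induction hx using Submodule.span_induction with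
  | mem z hz => exact D.bsymm1 hz hy
  | zero => simp
  | add x z _ _ h1 h2 => simp only [map_add, LinearMap.add_apply, h1, h2]
  | smul r x _ h => simp only [map_smul, LinearMap.smul_apply, smul_eq_mul, h]

/-- invariance properties of the endomorphisms in `W`. -/
def Pres (g : Module.End ℝ V) : Prop :=
  (∀ x ∈ Submodule.span ℝ D.Pi, g x ∈ Submodule.span ℝ D.Pi) ∧
  (∀ (x : V), ∀ y ∈ Submodule.span ℝ D.Pi, D.B (g x) (g y) = D.B x y)

theorem pres_mul {f g : Module.End ℝ V} (hf : D.Pres f) (hg : D.Pres g) : D.Pres (f * g) := by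
  constructor
  · intro x hx
    exact hf.1 _ (hg.1 x hx)
  · intro x y hy
    rw [Module.End.mul_apply, Module.End.mul_apply, hf.2 (g x) (g y) (hg.1 y hy), hg.2 x y hy]

theorem pres_refl {a : V} (ha : a ∈ D.Pi) : D.Pres (D.refl a) := by
  have haS : a ∈ Submodule.span ℝ D.Pi := Submodule.subset_span ha
  constructor
  · intro x hx
    exact Submodule.sub_mem _ hx (Submodule.smul_mem _ _ haS)
  · intro x y hy
    simp only [refl_apply, map_sub, map_smul, LinearMap.sub_apply, LinearMap.smul_apply,
      smul_eq_mul, D.norm_one a ha, D.bsymm haS hy]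
    ring

theorem pres_one : D.Pres 1 := by
  constructor
  · intro x hx; simpa using hx
  · intro x y _; simp

theorem pres_of_mem {g : (Module.End ℝ V)ˣ} (hg : g ∈ D.Wgrp) :
    D.Pres (g : Module.End ℝ V) ∧ D.Pres ((g⁻¹ : (Module.End ℝ V)ˣ) : Module.End ℝ V) := by
  induction hg using Subgroup.closure_induction with
  | mem s hs =>
      obtain ⟨α, hα, hcoe⟩ := hs
      have h1 : D.Pres (s : Module.End ℝ V) := by rw [hcoe]; exact D.pres_refl hα
      have h2 : s⁻¹ = s := D.unit_inv_eq hcoe (D.norm_one α hα)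
      exact ⟨h1, by rw [h2]; exact h1⟩
  | one => exact ⟨by simpa using D.pres_one, by simpa using D.pres_one⟩
  | mul g h _ _ ihg ihh =>
      constructor
      · rw [Units.val_mul]; exact D.pres_mul ihg.1 ihh.1
      · rw [mul_inv_rev, Units.val_mul]; exact D.pres_mul ihh.2 ihg.2
  | inv g _ ihg => exact ⟨ihg.2, by simpa using ihg.1⟩

theorem apply_mem_span {g : (Module.End ℝ V)ˣ} (hg : g ∈ D.Wgrp) {x : V}
    (hx : x ∈ Submodule.span ℝ D.Pi) : (g : Module.End ℝ V) x ∈ Submodule.span ℝ D.Pi :=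
  (D.pres_of_mem hg).1.1 x hx

theorem b_invariant {g : (Module.End ℝ V)ˣ} (hg : g ∈ D.Wgrp) (x : V) {y : V}
    (hy : y ∈ Submodule.span ℝ D.Pi) :
    D.B ((g : Module.End ℝ V) x) ((g : Module.End ℝ V) y) = D.B x y :=
  (D.pres_of_mem hg).1.2 x y hy

theorem unit_apply_inv_apply (g : (Module.End ℝ V)ˣ) (x : V) :
    (g : Module.End ℝ V) (((g⁻¹ : (Module.End ℝ V)ˣ) : Module.End ℝ V) x) = x := by
  have h : ((g : Module.End ℝ V) * ((g⁻¹ : (Module.End ℝ V)ˣ) : Module.End ℝ V)) x = x := by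
    rw [← Units.val_mul, mul_inv_cancel, Units.val_one, Module.End.one_apply]
  rwa [Module.End.mul_apply] at h

theorem b_inv_apply {g : (Module.End ℝ V)ˣ} (hg : g ∈ D.Wgrp) (x : V) {y : V}
    (hy : y ∈ Submodule.span ℝ D.Pi) :
    D.B (((g⁻¹ : (Module.End ℝ V)ˣ) : Module.End ℝ V) x) y
      = D.B x ((g : Module.End ℝ V) y) := by
  conv_rhs => rw [← unit_apply_inv_apply g x]
  exact (D.b_invariant hg _ hy).symm

theorem conj_refl {g : (Module.End ℝ V)ˣ} (hg : g ∈ D.Wgrp) {γ : V}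
    (hγ : γ ∈ Submodule.span ℝ D.Pi) :
    (g : Module.End ℝ V) * D.refl γ * ((g⁻¹ : (Module.End ℝ V)ˣ) : Module.End ℝ V)
      = D.refl ((g : Module.End ℝ V) γ) := by
  apply LinearMap.ext; intro x
  simp only [Module.End.mul_apply, refl_apply, map_sub, map_smul]
  rw [unit_apply_inv_apply, D.b_inv_apply hg x hγ]

end CoxeterDatum

end AuxProof
section AuxProof2

namespace CoxeterDatum

open Module

variable {V : Type*} [AddCommGroup V] [Module ℝ V] (D : CoxeterDatum V)

/-- A word in the simple reflections. -/
def IsWord (l : List (Module.End ℝ V)ˣ) : Prop := ∀ u ∈ l, u ∈ D.simples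

theorem word_prod_mem {l : List (Module.End ℝ V)ˣ} (hl : D.IsWord l) : l.prod ∈ D.Wgrp := by
  induction l with
  | nil => simpa using Subgroup.one_mem _
  | cons u l ih =>
      rw [List.prod_cons]
      exact mul_mem (Subgroup.subset_closure (hl u (List.mem_cons_self)))
        (ih fun x hx => hl x (List.mem_cons_of_mem u hx))

theorem len_le {l : List (Module.End ℝ V)ˣ} (hl : D.IsWord l) {w : (Module.End ℝ V)ˣ}
    (hw : l.prod = w) : D.len w ≤ l.length :=
  Nat.sInf_le ⟨l, rfl, hl, hw⟩

theorem word_reverse_prod {l : List (Module.End ℝ V)ˣ} (hl : D.IsWord l) :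
    l.reverse.prod = l.prod⁻¹ := by
  induction l with
  | nil => simp
  | cons u l ih =>
      rw [List.reverse_cons, List.prod_append, List.prod_cons, List.prod_nil, mul_one,
        List.prod_cons, mul_inv_rev, ih fun x hx => hl x (List.mem_cons_of_mem u hx),
        D.simple_inv (hl u (List.mem_cons_self))]

theorem exists_word {w : (Module.End ℝ V)ˣ} (hw : w ∈ D.Wgrp) :
    ∃ l, D.IsWord l ∧ l.prod = w := by
  induction hw using Subgroup.closure_induction with
  | mem s hs =>
      refine ⟨[s], fun u hu => ?_, by simp⟩
      rw [List.mem_singleton] at hu; exact hu ▸ hs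
  | one => exact ⟨[], fun u hu => absurd hu (List.not_mem_nil), List.prod_nil⟩
  | mul x y _ _ ihx ihy =>
      obtain ⟨lx, hlx, hpx⟩ := ihx
      obtain ⟨ly, hly, hpy⟩ := ihy
      refine ⟨lx ++ ly, fun u hu => ?_, by rw [List.prod_append, hpx, hpy]⟩
      rcases List.mem_append.1 hu with h | h
      exacts [hlx u h, hly u h]
  | inv x _ ihx =>
      obtain ⟨lx, hlx, hpx⟩ := ihx
      refine ⟨lx.reverse, fun u hu => hlx u (List.mem_reverse.1 hu), ?_⟩
      rw [D.word_reverse_prod hlx, hpx]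

theorem exists_reduced {w : (Module.End ℝ V)ˣ} (hw : w ∈ D.Wgrp) :
    ∃ l, D.IsWord l ∧ l.prod = w ∧ l.length = D.len w := by
  have hne : {n | ∃ l : List (Module.End ℝ V)ˣ,
      l.length = n ∧ (∀ u ∈ l, u ∈ D.simples) ∧ l.prod = w}.Nonempty := by
    obtain ⟨l, hl, hp⟩ := D.exists_word hw
    exact ⟨l.length, l, rfl, hl, hp⟩
  obtain ⟨l, hlen, hl, hp⟩ := Nat.sInf_mem hne
  exact ⟨l, hl, hp, hlen⟩

theorem len_one : D.len 1 = 0 :=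
  Nat.sInf_eq_zero.2 (Or.inl ⟨[], rfl, fun u hu => absurd hu (List.not_mem_nil),
    List.prod_nil⟩)

theorem eq_one_of_len_zero {w : (Module.End ℝ V)ˣ} (hw : w ∈ D.Wgrp) (h : D.len w = 0) :
    w = 1 := by
  obtain ⟨l, _, hp, hlen⟩ := D.exists_reduced hw
  rw [h, List.length_eq_zero_iff] at hlen
  rw [← hp, hlen, List.prod_nil]

theorem len_mul_le {w v : (Module.End ℝ V)ˣ} (hw : w ∈ D.Wgrp) (hv : v ∈ D.Wgrp) :
    D.len (w * v) ≤ D.len w + D.len v := by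
  obtain ⟨lw, hlw, hpw, hlenw⟩ := D.exists_reduced hw
  obtain ⟨lv, hlv, hpv, hlenv⟩ := D.exists_reduced hv
  have : D.len (w * v) ≤ (lw ++ lv).length := by
    refine D.len_le (fun u hu => ?_) (by rw [List.prod_append, hpw, hpv])
    rcases List.mem_append.1 hu with h | h
    exacts [hlw u h, hlv u h]
  simpa [hlenw, hlenv] using this

theorem len_simple_le {s : (Module.End ℝ V)ˣ} (hs : s ∈ D.simples) : D.len s ≤ 1 := by
  have h : D.len s ≤ ([s] : List (Module.End ℝ V)ˣ).length :=
    D.len_le (fun u hu => by rw [List.mem_singleton] at hu; exact hu ▸ hs) (by simp)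
  simpa using h

theorem len_le_len_mul_simple_add_one {w s : (Module.End ℝ V)ˣ} (hw : w ∈ D.Wgrp)
    (hs : s ∈ D.simples) : D.len w ≤ D.len (w * s) + 1 := by
  have hsW : s ∈ D.Wgrp := Subgroup.subset_closure hs
  have h1 : (w * s) * s = w := by rw [mul_assoc, D.simple_sq hs, mul_one]
  calc D.len w = D.len ((w * s) * s) := by rw [h1]
    _ ≤ D.len (w * s) + D.len s := D.len_mul_le (mul_mem hw hsW) hsW
    _ ≤ D.len (w * s) + 1 := Nat.add_le_add_left (D.len_simple_le hs) _

theorem exists_descent {w : (Module.End ℝ V)ˣ} (hw : w ∈ D.Wgrp) (hne : w ≠ 1) :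
    ∃ β ∈ D.Pi, ∃ sb : (Module.End ℝ V)ˣ, sb ∈ D.simples ∧
      (sb : Module.End ℝ V) = D.refl β ∧ D.len (w * sb) < D.len w := by
  obtain ⟨l, hl, hp, hlen⟩ := D.exists_reduced hw
  have hlne : l ≠ [] := by
    rintro rfl
    exact hne (by rw [← hp, List.prod_nil])
  set u := l.getLast hlne with hu
  have husimple : u ∈ D.simples := hl u (List.getLast_mem hlne)
  obtain ⟨β, hβ, hcoe⟩ := husimple
  refine ⟨β, hβ, u, ⟨β, hβ, hcoe⟩, hcoe, ?_⟩
  have hsplit : l.dropLast ++ [u] = l := List.dropLast_append_getLast hlne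
  have hp2 : l.dropLast.prod * u = w := by
    conv_rhs => rw [← hp, ← hsplit]
    rw [List.prod_append, List.prod_cons, List.prod_nil, mul_one]
  have hwu : w * u = l.dropLast.prod := by
    rw [← hp2, mul_assoc, D.simple_sq ⟨β, hβ, hcoe⟩, mul_one]
  have hdrop : D.IsWord l.dropLast := fun x hx => hl x (List.dropLast_subset l hx)
  have := D.len_le hdrop hwu.symm
  have hlen' : l.dropLast.length = l.length - 1 := List.length_dropLast
  have hpos : 0 < l.length := List.length_pos_iff.2 hlne
  omega

end CoxeterDatum

end AuxProof2
section AuxProof3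

namespace CoxeterDatum

/-! ### Chebyshev-like sequences and trigonometric sums -/

noncomputable def useq (c : ℝ) : ℕ → ℝ
  | 0 => 0
  | 1 => 1
  | (k+2) => 2*c*useq c (k+1) - useq c k

@[simp] theorem useq_zero (c : ℝ) : useq c 0 = 0 := rfl
@[simp] theorem useq_one (c : ℝ) : useq c 1 = 1 := rfl
theorem useq_add_two (c : ℝ) (k : ℕ) : useq c (k+2) = 2*c*useq c (k+1) - useq c k := rfl

theorem useq_ge_one {c : ℝ} (hc : 1 ≤ c) :
    ∀ k, 0 ≤ useq c k ∧ useq c k ≤ useq c (k+1) ∧ 1 ≤ useq c (k+1)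
  | 0 => ⟨le_rfl, by norm_num, by norm_num⟩
  | (k+1) => by
      obtain ⟨h0, h1, h2⟩ := useq_ge_one hc k
      refine ⟨by linarith, ?_, ?_⟩
      · rw [useq_add_two]; nlinarith
      · rw [useq_add_two]; nlinarith

theorem useq_sin (θ : ℝ) : ∀ k : ℕ, useq (Real.cos θ) k * Real.sin θ = Real.sin (k * θ)
  | 0 => by simp
  | 1 => by simp
  | (k+2) => by
      have h1 := useq_sin θ (k+1)
      have h2 := useq_sin θ k
      push_cast at h1 h2 ⊢
      rw [useq_add_two]
      have e : Real.sin (((k:ℝ)+2)*θ)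
          = 2*Real.cos θ*Real.sin (((k:ℝ)+1)*θ) - Real.sin ((k:ℝ)*θ) := by
        have a1 : ((k:ℝ)+2)*θ = ((k:ℝ)+1)*θ + θ := by ring
        have a2 : (k:ℝ)*θ = ((k:ℝ)+1)*θ - θ := by ring
        rw [a1, a2, Real.sin_add, Real.sin_sub]; ring
      rw [e, ← h1, ← h2]; ring

theorem sum_sin_zero (m : ℕ) (hm : 2 ≤ m) (d : ℝ) :
    ∑ k ∈ Finset.range m, Real.sin ((2*(k:ℝ) + d) * (Real.pi / m)) = 0 := by
  set θ := Real.pi / m with hθ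
  have hm0 : (0:ℝ) < (m:ℝ) := by exact_mod_cast Nat.lt_of_lt_of_le (by norm_num) hm
  have hmθ : (m:ℝ) * θ = Real.pi := by rw [hθ]; field_simp
  have hθpos : 0 < θ := by rw [hθ]; positivity
  have hθlt : θ < Real.pi := by
    rw [hθ, div_lt_iff₀ hm0]
    have h2m : (2:ℝ) ≤ (m:ℝ) := by exact_mod_cast hm
    nlinarith [Real.pi_pos, mul_le_mul_of_nonneg_left h2m Real.pi_pos.le]
  have hsin : 0 < Real.sin θ := Real.sin_pos_of_pos_of_lt_pi hθpos hθlt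
  have key : ∀ k : ℕ, 2 * Real.sin θ * Real.sin ((2*(k:ℝ)+d)*θ)
      = (fun i : ℕ => Real.cos ((2*(i:ℝ)+d-1)*θ)) k
        - (fun i : ℕ => Real.cos ((2*(i:ℝ)+d-1)*θ)) (k+1) := by
    intro k
    have a1 : (2*(k:ℝ)+d-1)*θ = (2*(k:ℝ)+d)*θ - θ := by ring
    have a2 : (2*((k:ℝ)+1)+d-1)*θ = (2*(k:ℝ)+d)*θ + θ := by ring
    show 2 * Real.sin θ * Real.sin ((2*(k:ℝ)+d)*θ)
      = Real.cos ((2*(k:ℝ)+d-1)*θ) - Real.cos ((2*(↑(k+1):ℝ)+d-1)*θ)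
    push_cast
    rw [a1, a2, Real.cos_sub, Real.cos_add]; ring
  have tele : 2 * Real.sin θ * ∑ k ∈ Finset.range m, Real.sin ((2*(k:ℝ)+d)*θ) = 0 := by
    rw [Finset.mul_sum, Finset.sum_congr rfl (fun k _ => key k), Finset.sum_range_sub']
    have e : (2*((m:ℕ):ℝ)+d-1)*θ = (d-1)*θ + 2*Real.pi := by
      rw [← hmθ]; ring
    simp only [Nat.cast_zero, e, Real.cos_add_two_pi]
    ring_nf
  have h2 : (2 : ℝ) * Real.sin θ ≠ 0 := by positivity
  rcases mul_eq_zero.1 tele with h | h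
  · exact absurd h h2
  · exact h

/-! ### Alternating words in a group -/

variable {G : Type*} [Group G]

def altW (s t : G) : ℕ → List G
  | 0 => []
  | (k+1) => (if k % 2 = 0 then t else s) :: altW s t k

@[simp] theorem altW_zero (s t : G) : altW s t 0 = [] := rfl

theorem altW_succ (s t : G) (k : ℕ) :
    altW s t (k+1) = (if k % 2 = 0 then t else s) :: altW s t k := rfl

@[simp] theorem altW_length (s t : G) : ∀ k, (altW s t k).length = k
  | 0 => rfl
  | (k+1) => by rw [altW_succ, List.length_cons, altW_length s t k]

theorem altW_mem (s t : G) : ∀ k, ∀ u ∈ altW s t k, u = s ∨ u = t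
  | 0 => by simp
  | (k+1) => by
      intro u hu
      rw [altW_succ] at hu
      rcases List.mem_cons.1 hu with h | h
      · split_ifs at h with hp
        exacts [Or.inr h, Or.inl h]
      · exact altW_mem s t k u h

theorem altW_ne_nil (s t : G) (k : ℕ) : altW s t (k+1) ≠ [] := by
  rw [altW_succ]; exact List.cons_ne_nil _ _

theorem altW_getLast (s t : G) : ∀ k, (altW s t (k+1)).getLast (altW_ne_nil s t k) = t
  | 0 => by simp [altW_succ]
  | (k+1) => by
      show ((if (k+1) % 2 = 0 then t else s) :: altW s t (k+1)).getLast _ = t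
      rw [List.getLast_cons (altW_ne_nil s t k)]
      exact altW_getLast s t k

theorem altW_prod_even (s t : G) : ∀ j, (altW s t (2*j)).prod = (s*t)^j
  | 0 => by simp
  | (j+1) => by
      have e : 2*(j+1) = (2*j+1)+1 := by ring
      rw [e, altW_succ, altW_succ, if_neg (by omega), if_pos (by omega),
        List.prod_cons, List.prod_cons, altW_prod_even s t j, pow_succ']
      rw [mul_assoc]

theorem altW_prod_odd (s t : G) (j : ℕ) : (altW s t (2*j+1)).prod = t * (s*t)^j := by
  rw [altW_succ, if_pos (by omega), List.prod_cons, altW_prod_even s t j]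

theorem alt_eq_altW {s t : G} (hst : s ≠ t) :
    ∀ (l : List G), (∀ u ∈ l, u = s ∨ u = t) → l.Chain' (· ≠ ·) →
      (∀ h : l ≠ [], l.getLast h = t) → l = altW s t l.length := by
  intro l
  induction l with
  | nil => simp
  | cons u l ih =>
    intro hmem hchain hlast
    cases l with
    | nil =>
        have hu : u = t := hlast (List.cons_ne_nil u [])
        simp [altW_succ, hu]
    | cons u' l' =>
        have hchain' := List.isChain_cons_cons.1 hchain
        have hl : u' :: l' = altW s t (u' :: l').length := by
          refine ih (fun x hx => hmem x (List.mem_cons_of_mem u hx)) hchain'.2 ?_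
          intro h
          rw [← hlast (List.cons_ne_nil _ _), List.getLast_cons h]
        have hlen : (u' :: l').length = l'.length + 1 := rfl
        rw [hlen, altW_succ] at hl
        have hu' : u' = if l'.length % 2 = 0 then t else s := (List.cons_eq_cons.1 hl).1
        have hu : u = if (l'.length + 1) % 2 = 0 then t else s := by
          by_cases hp : l'.length % 2 = 0
          · rw [if_neg (by omega)]
            rw [if_pos hp] at hu'
            rcases hmem u (List.mem_cons_self) with h | h
            · exact h
            · exact absurd (h.trans hu'.symm) hchain'.1
          · rw [if_pos (by omega)]
            rw [if_neg hp] at hu'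
            rcases hmem u (List.mem_cons_self) with h | h
            · exact absurd (h.trans hu'.symm) hchain'.1
            · exact h
        show u :: u' :: l' = altW s t ((l'.length + 1) + 1)
        have htail : u' :: l' = altW s t (l'.length + 1) := by
          rw [altW_succ]; exact hl
        rw [altW_succ s t (l'.length + 1), ← hu, ← htail]

end CoxeterDatum

end AuxProof3
section AuxProof4

namespace CoxeterDatum

open Module

variable {V : Type*} [AddCommGroup V] [Module ℝ V] (D : CoxeterDatum V)

theorem refl_comb₁ {α β : V} (hα : α ∈ D.Pi) {c : ℝ} (hc' : D.B β α = -c) (p q : ℝ) :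
    D.refl α (p • α + q • β) = (2*c*q - p) • α + q • β := by
  rw [refl_apply]
  have h1 : D.B (p • α + q • β) α = p - q * c := by
    simp only [map_add, map_smul, LinearMap.add_apply, LinearMap.smul_apply, smul_eq_mul,
      D.norm_one α hα, hc']
    ring
  rw [h1]
  module

theorem refl_comb₂ {α β : V} (hβ : β ∈ D.Pi) {c : ℝ} (hc : D.B α β = -c) (p q : ℝ) :
    D.refl β (p • α + q • β) = p • α + (2*c*p - q) • β := by
  rw [refl_apply]
  have h1 : D.B (p • α + q • β) β = q - p * c := by
    simp only [map_add, map_smul, LinearMap.add_apply, LinearMap.smul_apply, smul_eq_mul,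
      D.norm_one β hβ, hc]
    ring
  rw [h1]
  module

theorem epow_alpha {α β : V} (hα : α ∈ D.Pi) (hβ : β ∈ D.Pi) {c : ℝ}
    (hc : D.B α β = -c) (hc' : D.B β α = -c) :
    ∀ k : ℕ, ((D.refl α * D.refl β)^k) α = useq c (2*k+1) • α + useq c (2*k) • β
  | 0 => by
      simp only [pow_zero, Module.End.one_apply, Nat.mul_zero, Nat.zero_add, useq_one,
        useq_zero, one_smul, zero_smul, add_zero]
  | (k+1) => by
      rw [pow_succ', Module.End.mul_apply, epow_alpha hα hβ hc hc' k, Module.End.mul_apply,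
        refl_comb₂ D hβ hc, refl_comb₁ D hα hc']
      have e1 : 2*(k+1)+1 = (2*k+1)+2 := by ring
      have e2 : 2*(k+1) = (2*k)+2 := by ring
      rw [e1, e2, useq_add_two c (2*k+1), useq_add_two c (2*k)]
      all_goals (match_scalars <;> ring)

theorem sum_epow_alpha {α β : V} (hα : α ∈ D.Pi) (hβ : β ∈ D.Pi) {m : ℕ} (hm : 2 ≤ m)
    (hc : D.B α β = -Real.cos (Real.pi/m)) (hc' : D.B β α = -Real.cos (Real.pi/m)) :
    ∑ k ∈ Finset.range m, ((D.refl α * D.refl β)^k) α = 0 := by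
  set θ := Real.pi/(m:ℝ) with hθ
  set c := Real.cos θ with hcθ
  have hm0 : (0:ℝ) < (m:ℝ) := by exact_mod_cast Nat.lt_of_lt_of_le (by norm_num) hm
  have hθpos : 0 < θ := by rw [hθ]; positivity
  have hθlt : θ < Real.pi := by
    rw [hθ, div_lt_iff₀ hm0]
    have h2m : (2:ℝ) ≤ (m:ℝ) := by exact_mod_cast hm
    nlinarith [Real.pi_pos, mul_le_mul_of_nonneg_left h2m Real.pi_pos.le]
  have hsin : Real.sin θ ≠ 0 := (Real.sin_pos_of_pos_of_lt_pi hθpos hθlt).ne'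
  have hsum : ∀ d : ℕ, (∑ k ∈ Finset.range m, useq c (2*k+d)) = 0 := by
    intro d
    have h1 : (∑ k ∈ Finset.range m, useq c (2*k+d)) * Real.sin θ = 0 := by
      rw [Finset.sum_mul]
      have hterm : ∀ k ∈ Finset.range m, useq c (2*k+d) * Real.sin θ
          = Real.sin ((2*(k:ℝ)+(d:ℝ)) * θ) := by
        intro k _
        rw [hcθ, useq_sin θ (2*k+d)]
        congr 1
        push_cast
        ring
      rw [Finset.sum_congr rfl hterm]
      exact sum_sin_zero m hm d
    rcases mul_eq_zero.1 h1 with h | h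
    exacts [h, absurd h hsin]
  have hterm : ∀ k ∈ Finset.range m, ((D.refl α * D.refl β)^k) α
      = useq c (2*k+1) • α + useq c (2*k) • β := fun k _ => D.epow_alpha hα hβ hc hc' k
  rw [Finset.sum_congr rfl hterm, Finset.sum_add_distrib, ← Finset.sum_smul, ← Finset.sum_smul]
  have h20 : ∀ k, 2*k = 2*k + 0 := fun k => rfl
  rw [hsum 1, show (∑ k ∈ Finset.range m, useq c (2*k)) = 0 from by
    simpa using hsum 0]
  simp

theorem epow_mul_epow' {α β : V} (hα : α ∈ D.Pi) (hβ : β ∈ D.Pi) :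
    ∀ k : ℕ, (D.refl α * D.refl β)^k * (D.refl β * D.refl α)^k = 1
  | 0 => by simp
  | (k+1) => by
      have hee : (D.refl α * D.refl β) * (D.refl β * D.refl α) = 1 := by
        rw [mul_assoc, ← mul_assoc (D.refl β), D.refl_mul_self (D.norm_one β hβ), one_mul,
          D.refl_mul_self (D.norm_one α hα)]
      rw [pow_succ, pow_succ', mul_assoc, ← mul_assoc (D.refl α * D.refl β), hee, one_mul,
        epow_mul_epow' hα hβ k]

theorem sum_epow_beta {α β : V} (hα : α ∈ D.Pi) (hβ : β ∈ D.Pi) {m : ℕ} (hm : 2 ≤ m)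
    (hc : D.B α β = -Real.cos (Real.pi/m)) (hc' : D.B β α = -Real.cos (Real.pi/m)) :
    ∑ k ∈ Finset.range m, ((D.refl α * D.refl β)^k) β = 0 := by
  have h1 : ∑ k ∈ Finset.range m, ((D.refl β * D.refl α)^k) β = 0 :=
    D.sum_epow_alpha hβ hα hm hc' hc
  have hkey : ∀ k ∈ Finset.range m, ((D.refl α * D.refl β)^(m-1-k)) β
      = ((D.refl α * D.refl β)^(m-1)) (((D.refl β * D.refl α)^k) β) := by
    intro k hk
    rw [Finset.mem_range] at hk
    have hle : k ≤ m - 1 := by omega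
    have hsplit : (D.refl α * D.refl β)^(m-1)
        = (D.refl α * D.refl β)^(m-1-k) * (D.refl α * D.refl β)^k := by
      rw [← pow_add]
      congr 1
      omega
    rw [← Module.End.mul_apply, hsplit, mul_assoc, D.epow_mul_epow' hα hβ k, mul_one]
  calc ∑ k ∈ Finset.range m, ((D.refl α * D.refl β)^k) β
      = ∑ k ∈ Finset.range m, ((D.refl α * D.refl β)^(m-1-k)) β :=
        (Finset.sum_range_reflect (fun k => ((D.refl α * D.refl β)^k) β) m).symm
    _ = ∑ k ∈ Finset.range m, ((D.refl α * D.refl β)^(m-1)) (((D.refl β * D.refl α)^k) β) :=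
        Finset.sum_congr rfl hkey
    _ = ((D.refl α * D.refl β)^(m-1)) (∑ k ∈ Finset.range m, ((D.refl β * D.refl α)^k) β) :=
        (map_sum _ _ _).symm
    _ = 0 := by rw [h1, map_zero]

theorem dihedral_order {α β : V} (hα : α ∈ D.Pi) (hβ : β ∈ D.Pi) {m : ℕ} (hm : 2 ≤ m)
    (hc : D.B α β = -Real.cos (Real.pi/m)) (hc' : D.B β α = -Real.cos (Real.pi/m)) :
    (D.refl α * D.refl β)^m = 1 := by
  set e := D.refl α * D.refl β with he
  have hev : ∀ v : V, (e - 1) v = (-(2*(D.B v α)) + 4*(D.B v β)*(D.B β α)) • α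
      + (-(2*(D.B v β))) • β := by
    intro v
    have : (e - 1) v = D.refl α (D.refl β v) - v := by
      rw [LinearMap.sub_apply, Module.End.one_apply, he, Module.End.mul_apply]
    rw [this, refl_apply, refl_apply]
    simp only [map_sub, map_smul, LinearMap.sub_apply, LinearMap.smul_apply, smul_eq_mul]
    module
  have hzero : (∑ k ∈ Finset.range m, e^k) * (e - 1) = 0 := by
    apply LinearMap.ext; intro v
    rw [Module.End.mul_apply, hev v, map_add, map_smul, map_smul, LinearMap.sum_apply,
      LinearMap.sum_apply]
    have hS1 : ∑ k ∈ Finset.range m, (e^k) α = 0 := D.sum_epow_alpha hα hβ hm hc hc'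
    have hS2 : ∑ k ∈ Finset.range m, (e^k) β = 0 := D.sum_epow_beta hα hβ hm hc hc'
    rw [hS1, hS2]
    simp
  have hgeom := geom_sum_mul e m
  rw [hzero] at hgeom
  have := hgeom.symm
  rwa [sub_eq_zero] at this

theorem unit_dihedral_order {α β : V} (hα : α ∈ D.Pi) (hβ : β ∈ D.Pi)
    {sα sβ : (Module.End ℝ V)ˣ} (hsα : (sα : Module.End ℝ V) = D.refl α)
    (hsβ : (sβ : Module.End ℝ V) = D.refl β) {m : ℕ} (hm : 2 ≤ m)
    (hc : D.B α β = -Real.cos (Real.pi/m)) (hc' : D.B β α = -Real.cos (Real.pi/m)) :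
    (sα * sβ)^m = 1 := by
  apply Units.ext
  rw [Units.val_pow_eq_pow_val, Units.val_mul, hsα, hsβ, D.dihedral_order hα hβ hm hc hc',
    Units.val_one]

theorem altW_prod_apply {α β : V} (hα : α ∈ D.Pi) (hβ : β ∈ D.Pi) {c : ℝ}
    (hc : D.B α β = -c) (hc' : D.B β α = -c)
    {sα sβ : (Module.End ℝ V)ˣ} (hsα : (sα : Module.End ℝ V) = D.refl α)
    (hsβ : (sβ : Module.End ℝ V) = D.refl β) :
    ∀ k : ℕ, (((altW sα sβ k).prod : (Module.End ℝ V)ˣ) : Module.End ℝ V) α =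
      if k % 2 = 0 then useq c (k+1) • α + useq c k • β
      else useq c k • α + useq c (k+1) • β
  | 0 => by
      have h0 : (0:ℕ) % 2 = 0 := rfl
      rw [altW_zero, List.prod_nil, if_pos h0]
      simp
  | (k+1) => by
      by_cases hp : k % 2 = 0
      · rw [altW_succ, if_pos hp, List.prod_cons, Units.val_mul, Module.End.mul_apply,
          altW_prod_apply hα hβ hc hc' hsα hsβ k, if_pos hp, hsβ,
          refl_comb₂ D hβ hc, if_neg (by omega : ¬ (k+1) % 2 = 0), useq_add_two c k]
      · rw [altW_succ, if_neg hp, List.prod_cons, Units.val_mul, Module.End.mul_apply,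
          altW_prod_apply hα hβ hc hc' hsα hsβ k, if_neg hp, hsα,
          refl_comb₁ D hα hc', if_pos (by omega : (k+1) % 2 = 0), useq_add_two c k]

end CoxeterDatum

end AuxProof4
section AuxProof5

namespace CoxeterDatum

open Module

variable {V : Type*} [AddCommGroup V] [Module ℝ V] (D : CoxeterDatum V)

theorem refl_ne_refl {α β : V} (hα : α ∈ D.Pi) (hβ : β ∈ D.Pi) (hne : α ≠ β) :
    D.refl α ≠ D.refl β := by
  intro h
  have h1 : D.refl β α = -α := by rw [← h]; exact D.refl_self (D.norm_one α hα)
  rw [refl_apply] at h1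
  have h3 : (2:ℝ) • α = (2 * D.B α β) • β := by
    linear_combination (norm := module) h1
  have h2 : α = (D.B α β) • β := by
    have h4 : (2:ℝ) • α = (2:ℝ) • ((D.B α β) • β) := by rw [h3, smul_smul]
    exact smul_right_injective V two_ne_zero h4
  have h5 : D.B α α = (D.B α β) ^ 2 := by
    conv_lhs => rw [h2]
    simp only [map_smul, LinearMap.smul_apply, smul_eq_mul, D.norm_one β hβ]
    ring
  rw [D.norm_one α hα] at h5
  have h6 : (D.B α β - 1) * (D.B α β + 1) = 0 := by nlinarith
  rcases mul_eq_zero.1 h6 with h7 | h7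
  · have : D.B α β = 1 := by linarith
    rw [this, one_smul] at h2
    exact hne h2
  · have : D.B α β = -1 := by linarith
    rw [this] at h2
    have h8 : α + β = 0 := by rw [h2]; module
    exact D.zero_not_plc (h8 ▸ PLC.add (PLC.of_mem hα) (PLC.of_mem hβ))

set_option maxHeartbeats 1000000 in
/-- Humphreys 5.4-type Theorem: if `ℓ(w sα) ≥ ℓ(w)` then `w α` is a positive combination. -/
theorem pos_of_len_ge (n : ℕ) : ∀ w : (Module.End ℝ V)ˣ, w ∈ D.Wgrp → D.len w = n →
    ∀ α ∈ D.Pi, ∀ sa : (Module.End ℝ V)ˣ, (sa : Module.End ℝ V) = D.refl α →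
    D.len w ≤ D.len (w * sa) → (w : Module.End ℝ V) α ∈ PLC D.Pi := by
  induction n using Nat.strong_induction_on with
  | _ n ih =>
  intro w hw hlen α hα sa hsa hge
  by_cases hw1 : w = 1
  · subst hw1
    simpa using PLC.of_mem hα
  obtain ⟨β, hβ, sb, hsbS, hsb, hdesc⟩ := D.exists_descent hw hw1
  have hsaS : sa ∈ D.simples := ⟨α, hα, hsa⟩
  have hab : α ≠ β := by
    rintro rfl
    have : sa = sb := Units.ext (by rw [hsa, hsb])
    rw [← this] at hdesc
    omega
  have hsasb : sa ≠ sb := by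
    intro h
    exact D.refl_ne_refl hα hβ hab (by rw [← hsa, ← hsb, h])
  -- the set of lengths of good dihedral suffixes
  set GS : Set ℕ := {k | ∃ x : List (Module.End ℝ V)ˣ, x.length = k ∧
    (∀ u ∈ x, u = sa ∨ u = sb) ∧ D.len (w * (x.prod)⁻¹) + k = D.len w} with hGS
  have hsb_inv : sb⁻¹ = sb := D.simple_inv hsbS
  have hsa_inv : sa⁻¹ = sa := D.simple_inv hsaS
  have h1GS : 1 ∈ GS := by
    refine ⟨[sb], rfl, fun u hu => Or.inr (List.mem_singleton.1 hu), ?_⟩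
    have h1 : D.len w ≤ D.len (w * sb) + 1 := D.len_le_len_mul_simple_add_one hw hsbS
    rw [List.prod_cons, List.prod_nil, mul_one, hsb_inv]
    omega
  have hbdd : BddAbove GS := by
    refine ⟨D.len w, fun k hk => ?_⟩
    obtain ⟨x, hx1, -, hx3⟩ := hk
    omega
  have hn0 := Nat.sSup_mem ⟨1, h1GS⟩ hbdd
  set n₀ := sSup GS with hn₀
  obtain ⟨x, hxlen, hxmem, hxeq⟩ := hn0
  have hn₀1 : 1 ≤ n₀ := le_csSup hbdd h1GS
  have hxW : D.IsWord x := by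
    intro u hu
    rcases hxmem u hu with rfl | rfl
    exacts [hsaS, hsbS]
  have hxWgrp : x.prod ∈ D.Wgrp := D.word_prod_mem hxW
  set v : (Module.End ℝ V)ˣ := w * (x.prod)⁻¹ with hv
  have hvW : v ∈ D.Wgrp := mul_mem hw (inv_mem hxWgrp)
  have hveq : v * x.prod = w := inv_mul_cancel_right w x.prod
  have hlenv : D.len v + n₀ = D.len w := by rw [hv]; exact hxeq
  -- no strictly-shorter dihedral word can have the same product
  have hnoshort : ∀ y : List (Module.End ℝ V)ˣ, D.IsWord y → y.prod = x.prod →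
      n₀ ≤ y.length + 1 := by
    intro y hyW hyp
    by_contra hcon
    push_neg at hcon
    have h2 : D.len w ≤ D.len v + y.length := by
      have h3 : D.len (v * y.prod) ≤ D.len v + D.len y.prod :=
        D.len_mul_le hvW (D.word_prod_mem hyW)
      have h4 : D.len y.prod ≤ y.length := D.len_le hyW rfl
      have h5 : v * y.prod = w := by rw [hyp]; exact hveq
      rw [h5] at h3
      omega
    omega
  -- maximality: cannot extend on the left
  have hstep : ∀ s : (Module.End ℝ V)ˣ, s ∈ D.simples → (s = sa ∨ s = sb) →
      D.len v ≤ D.len (v * s) := by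
    intro s hsS hsor
    by_contra hlt
    push_neg at hlt
    have hsinv : s⁻¹ = s := D.simple_inv hsS
    have hprod : w * ((s :: x).prod)⁻¹ = v * s := by
      rw [List.prod_cons, mul_inv_rev, hsinv, ← mul_assoc, ← hv]
    have h1 : D.len v ≤ D.len (v * s) + 1 := D.len_le_len_mul_simple_add_one hvW hsS
    have hmem' : n₀ + 1 ∈ GS := by
      refine ⟨s :: x, by simp [hxlen], ?_, ?_⟩
      · intro u hu
        rcases List.mem_cons.1 hu with rfl | hu
        exacts [hsor, hxmem u hu]
      · rw [hprod]
        omega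
    have := le_csSup hbdd hmem'
    omega
  have hvsa : D.len v ≤ D.len (v * sa) := hstep sa hsaS (Or.inl rfl)
  have hvsb : D.len v ≤ D.len (v * sb) := hstep sb hsbS (Or.inr rfl)
  -- x has no adjacent equal letters
  have hchain : x.Chain' (· ≠ ·) := by
    show x.IsChain _
    rw [List.isChain_iff_getElem]
    intro i hi
    have hii : i < x.length := by omega
    have hi1 : i + 1 < x.length := by omega
    show x.get ⟨i, hii⟩ ≠ x.get ⟨i+1, hi1⟩
    intro hne
    have h1 : x.drop i = x.get ⟨i, hii⟩ :: x.drop (i+1) := List.drop_eq_getElem_cons hii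
    have h2 : x.drop (i+1) = x.get ⟨i+1, hi1⟩ :: x.drop (i+2) := List.drop_eq_getElem_cons hi1
    have husimple : x.get ⟨i, hii⟩ ∈ D.simples := hxW _ (x.get_mem _)
    have hyprod : (x.take i ++ x.drop (i+2)).prod = x.prod := by
      conv_rhs => rw [← List.take_append_drop i x]
      rw [List.prod_append, List.prod_append, h1, h2, ← hne, List.prod_cons, List.prod_cons,
        ← mul_assoc (x.get ⟨i, hii⟩) (x.get ⟨i, hii⟩), D.simple_sq husimple, one_mul]
    have hyW : D.IsWord (x.take i ++ x.drop (i+2)) := by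
      intro u hu
      rcases List.mem_append.1 hu with h | h
      exacts [hxW u (List.take_subset i x h), hxW u (List.drop_subset (i+2) x h)]
    have hylen : (x.take i ++ x.drop (i+2)).length = x.length - 2 := by
      rw [List.length_append, List.length_take, List.length_drop]
      omega
    have := hnoshort _ hyW hyprod
    omega
  -- x ends with sb
  have hxne : x ≠ [] := by
    intro h
    rw [h] at hxlen
    simp at hxlen
    omega
  have hlast : x.getLast hxne = sb := by
    by_contra hne
    have hu : x.getLast hxne = sa := by
      rcases hxmem _ (x.getLast_mem hxne) with h | h
      exacts [h, absurd h hne]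
    have hsplit : x.dropLast ++ [x.getLast hxne] = x := List.dropLast_append_getLast hxne
    have hxp : x.prod = x.dropLast.prod * sa := by
      conv_lhs => rw [← hsplit]
      rw [List.prod_append, List.prod_cons, List.prod_nil, mul_one, hu]
    have hwsa : w * sa = v * x.dropLast.prod := by
      have h7 : x.prod * sa = x.dropLast.prod := by
        rw [hxp, mul_assoc, D.simple_sq hsaS, mul_one]
      rw [← hveq, mul_assoc, h7]
    have hdW : D.IsWord x.dropLast := fun u hu => hxW u (List.dropLast_subset x hu)
    have h3 : D.len (w * sa) ≤ D.len v + (n₀ - 1) := by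
      rw [hwsa]
      have h4 := D.len_mul_le hvW (D.word_prod_mem hdW)
      have h5 := D.len_le hdW (rfl : x.dropLast.prod = x.dropLast.prod)
      have h6 : x.dropLast.length = n₀ - 1 := by rw [List.length_dropLast, hxlen]
      omega
    omega
  have hxalt : x = altW sa sb n₀ := by
    rw [← hxlen]
    exact alt_eq_altW hsasb x hxmem hchain (fun h => hlast)
  -- set up the form values; obtain positivity of the coefficients
  obtain ⟨c, hc, hc', h0pos, h1nonneg⟩ :
      ∃ c : ℝ, D.B α β = -c ∧ D.B β α = -c ∧ 0 < useq c n₀ ∧ 0 ≤ useq c (n₀+1) := by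
    have hsymm : D.B β α = D.B α β := D.symm β hβ α hα
    rcases D.offdiag α hα β hβ hab with ⟨m, hm2, hBcos⟩ | hBle
    · -- finite order case
      set θ := Real.pi/(m:ℝ) with hθ
      set c := Real.cos θ with hcθ
      have hm0 : (0:ℝ) < (m:ℝ) := by exact_mod_cast Nat.lt_of_lt_of_le (by norm_num) hm2
      have hθpos : 0 < θ := by rw [hθ]; positivity
      have hθle : θ ≤ Real.pi / 2 := by
        rw [hθ]
        apply div_le_div_of_nonneg_left Real.pi_pos.le (by norm_num)
        exact_mod_cast hm2
      have hθlt : θ < Real.pi := by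
        nlinarith [Real.pi_pos]
      have hsin : 0 < Real.sin θ := Real.sin_pos_of_pos_of_lt_pi hθpos hθlt
      have hc : D.B α β = -c := hBcos
      have hc' : D.B β α = -c := by rw [hsymm]; exact hBcos
      -- first: rule out n₀ ≥ m
      have hn₀m : n₀ < m := by
        by_contra hcon
        push_neg at hcon
        have hg : (sa * sb)^m = 1 := D.unit_dihedral_order hα hβ hsa hsb hm2 hc hc'
        have hinvg : sb * sa = (sa * sb)⁻¹ := by rw [mul_inv_rev, hsa_inv, hsb_inv]
        rcases eq_or_lt_of_le hcon with heq | hlt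
        · -- n₀ = m : braid move, contradiction with hge
          obtain ⟨m', rfl⟩ : ∃ m', m = m' + 1 := ⟨m - 1, by omega⟩
          have hbraid : (altW sa sb (m'+1)).prod = (altW sb sa (m'+1)).prod := by
            rcases Nat.even_or_odd (m'+1) with ⟨j, hj⟩ | ⟨j, hj⟩
            · rw [show m' + 1 = 2*j by omega, altW_prod_even, altW_prod_even, hinvg, inv_pow]
              have h2 : (sa*sb)^j * (sa*sb)^j = 1 := by
                rw [← pow_add, show j + j = m'+1 by omega, hg]
              exact eq_inv_of_mul_eq_one_left h2
            · rw [show m' + 1 = 2*j+1 by omega, altW_prod_odd, altW_prod_odd, hinvg, inv_pow]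
              have h2 : (sa*sb)^(j+1) * (sa*sb)^j = 1 := by
                rw [← pow_add, show j + 1 + j = m'+1 by omega, hg]
              have h3 : (sa*sb)^(j+1) = ((sa*sb)^j)⁻¹ := eq_inv_of_mul_eq_one_left h2
              apply mul_left_cancel (a := sa)
              rw [← mul_assoc, ← mul_assoc, D.simple_sq hsaS, one_mul, ← pow_succ', h3]
          -- now x.prod = (altW sb sa m).prod which ends in sa
          have hxne2 : altW sb sa (m'+1) ≠ [] := altW_ne_nil sb sa m'
          have hlast2 : (altW sb sa (m'+1)).getLast hxne2 = sa := altW_getLast sb sa m'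
          have hW2 : D.IsWord (altW sb sa (m'+1)) := by
            intro u hu
            rcases altW_mem sb sa (m'+1) u hu with rfl | rfl
            exacts [hsbS, hsaS]
          have hsplit : (altW sb sa (m'+1)).dropLast ++ [sa] = altW sb sa (m'+1) := by
            conv_rhs => rw [← List.dropLast_append_getLast hxne2]
            rw [hlast2]
          have hxp : x.prod = (altW sb sa (m'+1)).dropLast.prod * sa := by
            rw [hxalt, ← heq, hbraid]
            conv_lhs => rw [← hsplit]
            rw [List.prod_append, List.prod_cons, List.prod_nil, mul_one]
          have hwsa : w * sa = v * (altW sb sa (m'+1)).dropLast.prod := by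
            have h7 : x.prod * sa = (altW sb sa (m'+1)).dropLast.prod := by
              rw [hxp, mul_assoc, D.simple_sq hsaS, mul_one]
            rw [← hveq, mul_assoc, h7]
          have hdW : D.IsWord (altW sb sa (m'+1)).dropLast :=
            fun u hu => hW2 u (List.dropLast_subset _ hu)
          have h3 : D.len (w * sa) ≤ D.len v + m' := by
            rw [hwsa]
            have h4 := D.len_mul_le hvW (D.word_prod_mem hdW)
            have h5 := D.len_le hdW (rfl : (altW sb sa (m'+1)).dropLast.prod = _)
            have h6 : (altW sb sa (m'+1)).dropLast.length = m' := by
              rw [List.length_dropLast, altW_length]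
              omega
            omega
          omega
        · -- n₀ > m : strictly shorter word with same product
          have hkey : ∃ y : List (Module.End ℝ V)ˣ, D.IsWord y ∧ y.prod = x.prod ∧
              y.length + 2 ≤ n₀ := by
            have haW : ∀ k, D.IsWord (altW sa sb k) := by
              intro k u hu
              rcases altW_mem sa sb k u hu with rfl | rfl
              exacts [hsaS, hsbS]
            have hbW : ∀ k, D.IsWord (altW sb sa k) := by
              intro k u hu
              rcases altW_mem sb sa k u hu with rfl | rfl
              exacts [hsbS, hsaS]
            rcases Nat.even_or_odd n₀ with ⟨j, hj⟩ | ⟨j, hj⟩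
            · have hxp : x.prod = (sa*sb)^j := by
                rw [hxalt, show n₀ = 2*j by omega, altW_prod_even]
              by_cases hjm : m ≤ j
              · refine ⟨altW sa sb (2*(j-m)), haW _, ?_, by rw [altW_length]; omega⟩
                rw [altW_prod_even, hxp]
                conv_rhs => rw [show j = (j-m) + m from by omega]
                rw [pow_add, hg, mul_one]
              · refine ⟨altW sb sa (2*(m-j)), hbW _, ?_, by rw [altW_length]; omega⟩
                rw [altW_prod_even, hxp, hinvg, inv_pow]
                symm
                apply eq_inv_of_mul_eq_one_left
                rw [← pow_add]
                have he2 : j + (m - j) = m := by omega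
                rw [he2, hg]
            · have hxp : x.prod = sb * (sa*sb)^j := by
                rw [hxalt, show n₀ = 2*j+1 by omega, altW_prod_odd]
              by_cases hjm : m ≤ j
              · refine ⟨altW sa sb (2*(j-m)+1), haW _, ?_, by rw [altW_length]; omega⟩
                rw [altW_prod_odd, hxp]
                conv_rhs => rw [show j = (j-m) + m from by omega]
                rw [pow_add, hg, mul_one]
              · have hmj1 : 2*(m-j)-1 = 2*(m-j-1)+1 := by omega
                refine ⟨altW sb sa (2*(m-j)-1), hbW _, ?_, by rw [altW_length]; omega⟩
                rw [hmj1, altW_prod_odd, hxp, hinvg, inv_pow]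
                have h2 : (sa*sb)^(m-j-1) * (sa*sb)^(j+1) = 1 := by
                  rw [← pow_add, show m - j - 1 + (j+1) = m by omega, hg]
                rw [inv_eq_of_mul_eq_one_right h2]
                rw [show (sa*sb)^(j+1) = sa*sb*(sa*sb)^j by rw [pow_succ']]
                rw [← mul_assoc, ← mul_assoc, D.simple_sq hsaS, one_mul]
            
          obtain ⟨y, hyW, hyp, hylen⟩ := hkey
          have := hnoshort y hyW hyp
          omega
      -- positivity of the coefficients from the sine formula
      refine ⟨c, hc, hc', ?_, ?_⟩
      · have hs := useq_sin θ n₀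
        have hpos : 0 < Real.sin ((n₀:ℝ) * θ) := by
          apply Real.sin_pos_of_pos_of_lt_pi
          · have : (1:ℝ) ≤ (n₀:ℝ) := by exact_mod_cast hn₀1
            nlinarith
          · have hlt : (n₀:ℝ) < (m:ℝ) := by exact_mod_cast hn₀m
            have : (n₀:ℝ) * θ < (m:ℝ) * θ := by
              apply mul_lt_mul_of_pos_right hlt hθpos
            have hmθ : (m:ℝ) * θ = Real.pi := by rw [hθ]; field_simp
            linarith
        nlinarith
      · have hs := useq_sin θ (n₀+1)
        have hpos : 0 ≤ Real.sin (((n₀:ℕ)+1:ℝ) * θ) := by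
          apply Real.sin_nonneg_of_nonneg_of_le_pi
          · positivity
          · have hle : ((n₀:ℝ)+1) ≤ (m:ℝ) := by exact_mod_cast hn₀m
            have hmθ : (m:ℝ) * θ = Real.pi := by rw [hθ]; field_simp
            nlinarith
        push_cast at hs
        nlinarith
    · -- infinite order case
      set c := -D.B α β with hcdef
      have hc1 : 1 ≤ c := by rw [hcdef]; linarith
      refine ⟨c, by rw [hcdef]; ring, by rw [hsymm, hcdef]; ring, ?_, ?_⟩
      · obtain ⟨-, -, h⟩ := useq_ge_one hc1 (n₀ - 1)
        rw [Nat.sub_add_cancel hn₀1] at h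
        linarith
      · obtain ⟨-, -, h⟩ := useq_ge_one hc1 n₀
        linarith
  -- inductive hypothesis applied to v
  have hvlt : D.len v < n := by omega
  have hvα : (v : Module.End ℝ V) α ∈ PLC D.Pi :=
    ih (D.len v) hvlt v hvW rfl α hα sa hsa hvsa
  have hvβ : (v : Module.End ℝ V) β ∈ PLC D.Pi :=
    ih (D.len v) hvlt v hvW rfl β hβ sb hsb hvsb
  -- conclude
  have hwact : (w : Module.End ℝ V) α
      = (v : Module.End ℝ V) ((x.prod : Module.End ℝ V) α) := by
    rw [← hveq, Units.val_mul, Module.End.mul_apply]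
  rw [hwact, hxalt, D.altW_prod_apply hα hβ hc hc' hsa hsb n₀]
  by_cases hp : n₀ % 2 = 0
  · rw [if_pos hp, map_add, map_smul, map_smul]
    exact PLC.combo hvα hvβ h1nonneg h0pos.le (Or.inr h0pos)
  · rw [if_neg hp, map_add, map_smul, map_smul]
    exact PLC.combo hvα hvβ h0pos.le h1nonneg (Or.inl h0pos)

end CoxeterDatum

end AuxProof5
section AuxProof6

namespace CoxeterDatum

open Module

variable {V : Type*} [AddCommGroup V] [Module ℝ V] (D : CoxeterDatum V)

theorem pos_neg_disjoint {x : V} (hp : x ∈ D.posRoots) (hn : x ∈ D.negRoots) : False :=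
  D.no_pos_neg hp.2 hn.2

theorem roots_subset_span {x : V} (hx : x ∈ D.roots) : x ∈ Submodule.span ℝ D.Pi := by
  obtain ⟨w, hw, α, hα, rfl⟩ := hx
  exact D.apply_mem_span hw (Submodule.subset_span hα)

theorem root_norm {x : V} (hx : x ∈ D.roots) : D.B x x = 1 := by
  obtain ⟨w, hw, α, hα, rfl⟩ := hx
  rw [D.b_invariant hw α (Submodule.subset_span hα)]
  exact D.norm_one α hα

theorem root_image {g : (Module.End ℝ V)ˣ} (hg : g ∈ D.Wgrp) {x : V} (hx : x ∈ D.roots) :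
    (g : Module.End ℝ V) x ∈ D.roots := by
  obtain ⟨w, hw, α, hα, rfl⟩ := hx
  exact ⟨g * w, mul_mem hg hw, α, hα, by rw [Units.val_mul, Module.End.mul_apply]⟩

theorem len_mul_refl_ne {w : (Module.End ℝ V)ˣ} (hw : w ∈ D.Wgrp) {α : V} (hα : α ∈ D.Pi)
    {sa : (Module.End ℝ V)ˣ} (hsa : (sa : Module.End ℝ V) = D.refl α) :
    D.len (w * sa) ≠ D.len w := by
  intro heq
  have hsaS : sa ∈ D.simples := ⟨α, hα, hsa⟩
  have hwsW : w * sa ∈ D.Wgrp := mul_mem hw (Subgroup.subset_closure hsaS)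
  have h1 : (w : Module.End ℝ V) α ∈ PLC D.Pi :=
    D.pos_of_len_ge (D.len w) w hw rfl α hα sa hsa (le_of_eq heq.symm)
  have hwss : w * sa * sa = w := by rw [mul_assoc, D.simple_sq hsaS, mul_one]
  have h2 : ((w * sa : (Module.End ℝ V)ˣ) : Module.End ℝ V) α ∈ PLC D.Pi := by
    refine D.pos_of_len_ge (D.len (w * sa)) (w * sa) hwsW rfl α hα sa hsa ?_
    rw [hwss, heq]
  have h3 : ((w * sa : (Module.End ℝ V)ˣ) : Module.End ℝ V) α
      = -((w : Module.End ℝ V) α) := by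
    rw [Units.val_mul, Module.End.mul_apply, hsa, D.refl_self (D.norm_one α hα), map_neg]
  rw [h3] at h2
  exact D.no_pos_neg h1 h2

theorem root_pos_or_neg {x : V} (hx : x ∈ D.roots) : x ∈ D.posRoots ∨ x ∈ D.negRoots := by
  obtain ⟨w, hw, α, hα, rfl⟩ := hx
  set sa := D.rUnit α (D.norm_one α hα) with hsadef
  have hsa : (sa : Module.End ℝ V) = D.refl α := rfl
  have hsaS : sa ∈ D.simples := ⟨α, hα, hsa⟩
  have hwsW : w * sa ∈ D.Wgrp := mul_mem hw (Subgroup.subset_closure hsaS)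
  have hwss : w * sa * sa = w := by rw [mul_assoc, D.simple_sq hsaS, mul_one]
  rcases le_or_gt (D.len w) (D.len (w * sa)) with h | h
  · left
    exact ⟨⟨w, hw, α, hα, rfl⟩, D.pos_of_len_ge (D.len w) w hw rfl α hα sa hsa h⟩
  · right
    have h2 : ((w * sa : (Module.End ℝ V)ˣ) : Module.End ℝ V) α ∈ PLC D.Pi := by
      refine D.pos_of_len_ge (D.len (w * sa)) (w * sa) hwsW rfl α hα sa hsa ?_
      rw [hwss]
      omega
    have h3 : ((w * sa : (Module.End ℝ V)ˣ) : Module.End ℝ V) α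
        = -((w : Module.End ℝ V) α) := by
      rw [Units.val_mul, Module.End.mul_apply, hsa, D.refl_self (D.norm_one α hα), map_neg]
    refine ⟨⟨w * sa, hwsW, α, hα, h3.symm⟩, ?_⟩
    rw [← h3]
    exact h2

theorem tset_mem_wgrp {t : (Module.End ℝ V)ˣ} (ht : t ∈ D.TSet) : t ∈ D.Wgrp := by
  obtain ⟨w, hw, s, hsS, rfl⟩ := ht
  exact mul_mem (mul_mem hw (Subgroup.subset_closure hsS)) (inv_mem hw)

theorem tset_exists_posroot {t : (Module.End ℝ V)ˣ} (ht : t ∈ D.TSet) :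
    ∃ γ ∈ D.posRoots, (t : Module.End ℝ V) = D.refl γ := by
  obtain ⟨w, hw, s, hsS, rfl⟩ := ht
  obtain ⟨α, hα, hcoe⟩ := hsS
  have hconj : ((w * s * w⁻¹ : (Module.End ℝ V)ˣ) : Module.End ℝ V)
      = D.refl ((w : Module.End ℝ V) α) := by
    rw [Units.val_mul, Units.val_mul, hcoe]
    exact D.conj_refl hw (Submodule.subset_span hα)
  have hroot : (w : Module.End ℝ V) α ∈ D.roots := ⟨w, hw, α, hα, rfl⟩
  rcases D.root_pos_or_neg hroot with h | h
  · exact ⟨_, h, hconj⟩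
  · exact ⟨-((w : Module.End ℝ V) α), h, hconj.trans (D.refl_neg _).symm⟩

theorem posroot_refl_unique {γ δ : V} (hγ : γ ∈ D.posRoots) (hδ : δ ∈ D.posRoots)
    (h : D.refl γ = D.refl δ) : γ = δ := by
  have h1 : D.refl δ γ = -γ := by rw [← h]; exact D.refl_self (D.root_norm hγ.1)
  rw [refl_apply] at h1
  have h3 : (2:ℝ) • γ = (2 * D.B γ δ) • δ := by
    linear_combination (norm := module) h1
  have h2 : γ = (D.B γ δ) • δ := by
    have h4 : (2:ℝ) • γ = (2:ℝ) • ((D.B γ δ) • δ) := by rw [h3, smul_smul]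
    exact smul_right_injective V two_ne_zero h4
  have h5 : D.B γ γ = (D.B γ δ) ^ 2 := by
    conv_lhs => rw [h2]
    simp only [map_smul, LinearMap.smul_apply, smul_eq_mul, D.root_norm hδ.1]
    ring
  rw [D.root_norm hγ.1] at h5
  have h6 : (D.B γ δ - 1) * (D.B γ δ + 1) = 0 := by nlinarith
  rcases mul_eq_zero.1 h6 with h7 | h7
  · have : D.B γ δ = 1 := by linarith
    rw [this, one_smul] at h2
    exact h2
  · have : D.B γ δ = -1 := by linarith
    rw [this] at h2
    have h8 : γ + δ = 0 := by rw [h2]; module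
    exact absurd (h8 ▸ PLC.add hγ.2 hδ.2) D.zero_not_plc

theorem offdiag_nonpos {α x : V} (hα : α ∈ D.Pi) (hx : x ∈ D.Pi) (hne : x ≠ α) :
    D.B α x ≤ 0 := by
  rcases D.offdiag α hα x hx (Ne.symm hne) with ⟨m, hm, h⟩ | h
  · rw [h]
    have hm0 : (0:ℝ) < (m:ℝ) := by exact_mod_cast Nat.lt_of_lt_of_le (by norm_num) hm
    have h1 : Real.pi / (m:ℝ) ≤ Real.pi / 2 := by
      apply div_le_div_of_nonneg_left Real.pi_pos.le (by norm_num)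
      exact_mod_cast hm
    have h2 : 0 ≤ Real.cos (Real.pi / (m:ℝ)) := by
      apply Real.cos_nonneg_of_mem_Icc
      constructor
      · have := Real.pi_pos
        have h3 : 0 < Real.pi / (m:ℝ) := by positivity
        linarith
      · exact h1
    linarith
  · linarith

/-- The key geometric lemma: a simple reflection sends no positive root other than its own
to a negative root. -/
theorem simple_perm {α : V} (hα : α ∈ D.Pi) {γ : V} (hγ : γ ∈ D.posRoots)
    (hneg : D.refl α γ ∈ D.negRoots) : γ = α := by
  classical
  by_contra hne
  obtain ⟨s₁, c₁, hs₁A, hc₁0, ⟨x₁, hx₁s, hx₁⟩, hγsum⟩ := hγ.2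
  have hδPLC : -(D.refl α γ) ∈ PLC D.Pi := hneg.2
  obtain ⟨s₂, c₂, hs₂A, hc₂0, -, hδsum⟩ := hδPLC
  set K := 2 * D.B γ α with hK
  have hsum : γ + -(D.refl α γ) = K • α := by rw [refl_apply, hK]; module
  set S := s₁ ∪ s₂ with hS
  set e : V → ℝ := fun x => (if x ∈ s₁ then c₁ x else 0) + (if x ∈ s₂ then c₂ x else 0)
    with he
  have heS : ∀ x ∈ S, 0 ≤ e x := by
    intro x _
    have h1 : (0:ℝ) ≤ if x ∈ s₁ then c₁ x else 0 := by
      split_ifs with h; exacts [hc₁0 x h, le_rfl]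
    have h2 : (0:ℝ) ≤ if x ∈ s₂ then c₂ x else 0 := by
      split_ifs with h; exacts [hc₂0 x h, le_rfl]
    show (0:ℝ) ≤ (if x ∈ s₁ then c₁ x else 0) + (if x ∈ s₂ then c₂ x else 0)
    linarith
  have hSPi : (↑S : Set V) ⊆ D.Pi := by
    intro x hx
    rcases Finset.mem_union.1 (Finset.mem_coe.1 hx) with h | h
    exacts [hs₁A (Finset.mem_coe.2 h), hs₂A (Finset.mem_coe.2 h)]
  have hmerge : ∑ x ∈ S, e x • x = K • α := by
    rw [← hsum, hδsum, hγsum]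
    have hs : ∑ x ∈ s₁, c₁ x • x = ∑ x ∈ S, (if x ∈ s₁ then c₁ x else 0) • x := by
      simp only [ite_smul, zero_smul, Finset.sum_ite_mem, hS, Finset.union_inter_cancel_left]
    have ht : ∑ x ∈ s₂, c₂ x • x = ∑ x ∈ S, (if x ∈ s₂ then c₂ x else 0) • x := by
      simp only [ite_smul, zero_smul, Finset.sum_ite_mem, hS, Finset.union_inter_cancel_right]
    rw [hs, ht, ← Finset.sum_add_distrib]
    refine Finset.sum_congr rfl fun x _ => ?_
    rw [he]
    rw [add_smul]
  have hx₁S : x₁ ∈ S := Finset.mem_union_left _ hx₁s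
  have hex₁ : 0 < e x₁ := by
    have h2 : (0:ℝ) ≤ if x₁ ∈ s₂ then c₂ x₁ else 0 := by
      split_ifs with h; exacts [hc₂0 x₁ h, le_rfl]
    show (0:ℝ) < (if x₁ ∈ s₁ then c₁ x₁ else 0) + (if x₁ ∈ s₂ then c₂ x₁ else 0)
    rw [if_pos hx₁s]
    linarith
  by_cases hA : ∀ x ∈ S, x ≠ α → e x = 0
  · -- γ is a multiple of α
    by_cases hαs : α ∈ s₁
    · have hγα : γ = c₁ α • α := by
        rw [hγsum]
        refine Finset.sum_eq_single_of_mem α hαs fun b hb hbne => ?_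
        have hb0 : e b = 0 := hA b (Finset.mem_union_left _ hb) hbne
        have hb0' : (if b ∈ s₁ then c₁ b else 0) + (if b ∈ s₂ then c₂ b else 0) = 0 := hb0
        rw [if_pos hb] at hb0'
        have hcb : c₁ b = 0 := by
          have h1 := hc₁0 b hb
          by_cases h : b ∈ s₂
          · rw [if_pos h] at hb0'
            have h2 := hc₂0 b h
            linarith
          · rw [if_neg h] at hb0'
            linarith
        rw [hcb, zero_smul]
      have hnorm : D.B γ γ = 1 := D.root_norm hγ.1
      rw [hγα] at hnorm
      simp only [map_smul, LinearMap.smul_apply, smul_eq_mul,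
        D.norm_one α hα] at hnorm
      have hc0 : 0 ≤ c₁ α := hc₁0 α hαs
      have : c₁ α = 1 := by nlinarith
      rw [hγα, this, one_smul] at hne
      exact hne rfl
    · have hγ0 : γ = 0 := by
        rw [hγsum]
        refine Finset.sum_eq_zero fun b hb => ?_
        have hbne : b ≠ α := fun h => hαs (h ▸ hb)
        have hb0 : e b = 0 := hA b (Finset.mem_union_left _ hb) hbne
        have hb0' : (if b ∈ s₁ then c₁ b else 0) + (if b ∈ s₂ then c₂ b else 0) = 0 := hb0
        rw [if_pos hb] at hb0'
        have hcb : c₁ b = 0 := by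
          have h1 := hc₁0 b hb
          by_cases h : b ∈ s₂
          · rw [if_pos h] at hb0'
            have h2 := hc₂0 b h
            linarith
          · rw [if_neg h] at hb0'
            linarith
        rw [hcb, zero_smul]
      exact D.zero_not_plc (hγ0 ▸ hγ.2)
  · push_neg at hA
    obtain ⟨x₀, hx₀S, hx₀ne, hx₀pos⟩ := hA
    have hx₀pos' : 0 < e x₀ := lt_of_le_of_ne (heS x₀ hx₀S) (Ne.symm hx₀pos)
    set eα : ℝ := if α ∈ S then e α else 0 with heα
    have heα0 : 0 ≤ eα := by
      rw [heα]; split_ifs with h; exacts [heS α h, le_rfl]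
    have herase : ∑ x ∈ S.erase α, e x • x = (K - eα) • α := by
      by_cases hαS : α ∈ S
      · have h1 := Finset.sum_erase_add S (fun x => e x • x) hαS
        rw [heα, if_pos hαS]
        have h2 : ∑ x ∈ S.erase α, e x • x = (∑ x ∈ S, e x • x) - e α • α := by
          rw [← h1]; abel
        rw [h2, hmerge, sub_smul]
      · rw [Finset.erase_eq_of_notMem hαS, hmerge, heα, if_neg hαS, sub_zero]
    have hx₀e : x₀ ∈ S.erase α := Finset.mem_erase.2 ⟨hx₀ne, hx₀S⟩
    rcases le_or_gt K eα with hKle | hKgt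
    · -- 0 is a positive combination : contradiction
      apply D.zero_not_plc
      refine ⟨insert α (S.erase α), fun x => if x = α then eα - K else e x, ?_, ?_, ?_, ?_⟩
      · intro x hx
        rcases Finset.mem_insert.1 (Finset.mem_coe.1 hx) with rfl | h
        · exact hα
        · exact hSPi (Finset.mem_coe.2 (Finset.mem_of_mem_erase h))
      · intro x hx
        show (0:ℝ) ≤ if x = α then eα - K else e x
        rcases Finset.mem_insert.1 hx with rfl | h
        · rw [if_pos rfl]; linarith
        · rw [if_neg (Finset.ne_of_mem_erase h)]
          exact heS x (Finset.mem_of_mem_erase h)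
      · refine ⟨x₀, Finset.mem_insert_of_mem hx₀e, ?_⟩
        show (0:ℝ) < if x₀ = α then eα - K else e x₀
        rw [if_neg hx₀ne]
        exact hx₀pos'
      · show (0:V) = ∑ x ∈ insert α (S.erase α), (if x = α then eα - K else e x) • x
        rw [Finset.sum_insert (Finset.notMem_erase α _), if_pos rfl]
        have hcongr : ∑ x ∈ S.erase α, (if x = α then eα - K else e x) • x
            = ∑ x ∈ S.erase α, e x • x := by
          refine Finset.sum_congr rfl fun x hx => ?_
          rw [if_neg (Finset.ne_of_mem_erase hx)]
        rw [hcongr, herase]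
        module
    · -- apply `B α` : contradiction
      have hBsum : D.B α (∑ x ∈ S.erase α, e x • x) ≤ 0 := by
        rw [map_sum]
        refine Finset.sum_nonpos fun x hx => ?_
        rw [map_smul, smul_eq_mul]
        have hxPi : x ∈ D.Pi := hSPi (Finset.mem_coe.2 (Finset.mem_of_mem_erase hx))
        exact mul_nonpos_of_nonneg_of_nonpos (heS x (Finset.mem_of_mem_erase hx))
          (D.offdiag_nonpos hα hxPi (Finset.ne_of_mem_erase hx))
      rw [herase, map_smul, smul_eq_mul, D.norm_one α hα, mul_one] at hBsum
      linarith

/-- Strong exchange (the direction we need). -/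
theorem strong_exchange {w t : (Module.End ℝ V)ˣ} (hw : w ∈ D.Wgrp) {γ : V}
    (hγ : γ ∈ D.posRoots) (ht : (t : Module.End ℝ V) = D.refl γ)
    (hneg : (w : Module.End ℝ V) γ ∈ D.negRoots) :
    D.len (w * t) < D.len w := by
  obtain ⟨l, hlW, hlp, hllen⟩ := D.exists_reduced hw
  have hn1 : 1 ≤ D.len w := by
    by_contra hcon
    push_neg at hcon
    have hw1 : w = 1 := D.eq_one_of_len_zero hw (by omega)
    rw [hw1, Units.val_one, Module.End.one_apply] at hneg
    exact D.pos_neg_disjoint hγ hneg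
  set J : Set ℕ := {k | k < D.len w ∧
    ((l.drop k).prod : Module.End ℝ V) γ ∈ D.negRoots} with hJ
  have hdropW : ∀ k, D.IsWord (l.drop k) := fun k u hu => hlW u (List.drop_subset k l hu)
  have hdropWgrp : ∀ k, (l.drop k).prod ∈ D.Wgrp := fun k => D.word_prod_mem (hdropW k)
  have h0J : 0 ∈ J := by
    refine ⟨by omega, ?_⟩
    rw [List.drop_zero, hlp]
    exact hneg
  have hbdd : BddAbove J := ⟨D.len w, fun k hk => hk.1.le⟩
  have hjmem := Nat.sSup_mem ⟨0, h0J⟩ hbdd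
  set j := sSup J with hjdef
  obtain ⟨hjn, hjneg⟩ := hjmem
  have hroots : ∀ k, ((l.drop k).prod : Module.End ℝ V) γ ∈ D.roots :=
    fun k => D.root_image (hdropWgrp k) hγ.1
  have hj1 : ((l.drop (j+1)).prod : Module.End ℝ V) γ ∉ D.negRoots := by
    rcases eq_or_lt_of_le (show j + 1 ≤ D.len w by omega) with heq | hlt'
    · have hlen' : l.length = D.len w := hllen
      have : l.drop (j+1) = [] := by
        apply List.drop_eq_nil_of_le
        omega
      rw [this, List.prod_nil, Units.val_one, Module.End.one_apply]
      exact fun hc => D.pos_neg_disjoint hγ hc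
    · intro hc
      have hmem : j + 1 ∈ J := ⟨hlt', hc⟩
      have := le_csSup hbdd hmem
      omega
  have hjpos : ((l.drop (j+1)).prod : Module.End ℝ V) γ ∈ D.posRoots := by
    rcases D.root_pos_or_neg (hroots (j+1)) with h | h
    exacts [h, absurd h hj1]
  have hjlt : j < l.length := by rw [hllen]; omega
  have hdropj : l.drop j = l.get ⟨j, hjlt⟩ :: l.drop (j+1) := List.drop_eq_getElem_cons hjlt
  have hgetS : l.get ⟨j, hjlt⟩ ∈ D.simples := hlW _ (l.get_mem _)
  obtain ⟨αj, hαj, hcoej⟩ := hgetS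
  have hrel : D.refl αj (((l.drop (j+1)).prod : Module.End ℝ V) γ)
      = ((l.drop j).prod : Module.End ℝ V) γ := by
    rw [hdropj, List.prod_cons, Units.val_mul, Module.End.mul_apply, hcoej]
  have hspp : ((l.drop (j+1)).prod : Module.End ℝ V) γ = αj := by
    apply D.simple_perm hαj hjpos
    rw [hrel]
    exact hjneg
  -- conjugation identity
  have hp1 : (l.drop (j+1)).prod ∈ D.Wgrp := hdropWgrp (j+1)
  have hconj : (l.drop (j+1)).prod * t * ((l.drop (j+1)).prod)⁻¹ = l.get ⟨j, hjlt⟩ := by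
    apply Units.ext
    rw [Units.val_mul, Units.val_mul, ht, hcoej]
    rw [D.conj_refl hp1 (D.roots_subset_span hγ.1), hspp]
  have hconj2 : (l.drop (j+1)).prod * t = l.get ⟨j, hjlt⟩ * (l.drop (j+1)).prod := by
    rw [← hconj]
    group
  have hgetS' : l.get ⟨j, hjlt⟩ ∈ D.simples := ⟨αj, hαj, hcoej⟩
  have hsplit : l.take j ++ l.drop j = l := List.take_append_drop j l
  have hw2 : w = (l.take j).prod * (l.get ⟨j, hjlt⟩ * (l.drop (j+1)).prod) := by
    conv_lhs => rw [← hlp, ← hsplit]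
    rw [List.prod_append, hdropj, List.prod_cons]
  have hwt : w * t = (l.take j ++ l.drop (j+1)).prod := by
    rw [List.prod_append]
    calc w * t = (l.take j).prod * (l.get ⟨j, hjlt⟩ * ((l.drop (j+1)).prod * t)) := by
          rw [hw2]; group
      _ = (l.take j).prod * (l.get ⟨j, hjlt⟩ * (l.get ⟨j, hjlt⟩ * (l.drop (j+1)).prod)) := by
          rw [hconj2]
      _ = (l.take j).prod * (l.drop (j+1)).prod := by
          rw [← mul_assoc (l.get ⟨j, hjlt⟩), D.simple_sq hgetS', one_mul]
  have hWy : D.IsWord (l.take j ++ l.drop (j+1)) := by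
    intro u hu
    rcases List.mem_append.1 hu with h | h
    exacts [hlW u (List.take_subset j l h), hlW u (List.drop_subset (j+1) l h)]
  have hlenle : D.len (w * t) ≤ (l.take j ++ l.drop (j+1)).length :=
    D.len_le hWy hwt.symm
  have hlength : (l.take j ++ l.drop (j+1)).length = l.length - 1 := by
    rw [List.length_append, List.length_take, List.length_drop]
    omega
  omega

end CoxeterDatum

end AuxProof6
section AuxProof7

namespace CoxeterDatum

theorem gram_aux {cc p q p' q' : ℝ} (hc : cc ≤ -1)
    (h1 : p*p + q*q + (p*q + q*p)*cc = 1) (h2 : p'*p' + q'*q' + (p'*q' + q'*p')*cc = 1) :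
    1 ≤ (p*p' + q*q' + (p*q' + q*p')*cc)^2 := by
  have hcc : 1 ≤ cc^2 := by nlinarith
  nlinarith [mul_nonneg (by nlinarith : (0:ℝ) ≤ cc^2 - 1) (sq_nonneg (p*q' - q*p')),
    sq_nonneg (p*q' - q*p')]

theorem dihedral_three_aux {t lam mu : ℝ} (ht : t ≤ -1) (h1 : lam + mu*t ≤ -1)
    (h2 : lam*t + mu ≤ -1) (h3 : lam*lam + mu*mu + 2*(lam*mu)*t = 1)
    (hlam : 0 < lam) (hmu : 0 < mu) : False := by
  nlinarith [mul_le_mul_of_nonneg_left h1 hlam.le, mul_le_mul_of_nonneg_left h2 hmu.le]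

end CoxeterDatum

end AuxProof7
set_option maxHeartbeats 2000000 in
/-- Proposition 1.8. Any reflection subgroup of an infinite dihedral reflection
subgroup `⟨r_a, r_b⟩` (with `(a,b) ≤ -1`) has at most 2 canonical generators. -/
theorem canGens_of_dihedral_reflection_subgroup (D : CoxeterDatum V) {a b : V}
    (ha : a ∈ D.posRoots) (hb : b ∈ D.posRoots) (hab : D.B a b ≤ -1)
    (ua ub : (Module.End ℝ V)ˣ)
    (hua : (ua : Module.End ℝ V) = D.refl a) (hub : (ub : Module.End ℝ V) = D.refl b)
    (W' : Subgroup (Module.End ℝ V)ˣ)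
    (hle : W' ≤ Subgroup.closure {ua, ub})
    (hrefl : W' = Subgroup.closure ((W' : Set (Module.End ℝ V)ˣ) ∩ D.TSet)) :
    (D.canGens W').Finite ∧ (D.canGens W').ncard ≤ 2 := by
  classical
  open CoxeterDatum in
  set P2 : Submodule ℝ V := Submodule.span ℝ {a, b} with hP2
  -- every element of ⟨ua, ub⟩ moves vectors within the plane span{a,b}
  have hmove : ∀ g ∈ Subgroup.closure ({ua, ub} : Set (Module.End ℝ V)ˣ), ∀ x : V,
      (g : Module.End ℝ V) x - x ∈ P2 := by
    intro g hg
    induction hg using Subgroup.closure_induction with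
    | mem s hs =>
        intro x
        have hkey : ∀ z : V, z ∈ ({a, b} : Set V) → ∀ u : (Module.End ℝ V)ˣ,
            (u : Module.End ℝ V) = D.refl z → (u : Module.End ℝ V) x - x ∈ P2 := by
          intro z hz u hu
          rw [hu, CoxeterDatum.refl_apply]
          have he : x - (2 * D.B x z) • z - x = -((2 * D.B x z) • z) := by module
          rw [he]
          exact Submodule.neg_mem _ (Submodule.smul_mem _ _ (Submodule.subset_span hz))
        rcases hs with rfl | hs'
        · exact hkey a (by simp) s hua
        · rw [Set.mem_singleton_iff] at hs'
          subst hs'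
          exact hkey b (by simp) s hub
    | one => intro x; simp
    | mul g h _ _ ihg ihh =>
        intro x
        have he : ((g * h : (Module.End ℝ V)ˣ) : Module.End ℝ V) x - x
            = ((g : Module.End ℝ V) ((h : Module.End ℝ V) x) - (h : Module.End ℝ V) x)
              + ((h : Module.End ℝ V) x - x) := by
          rw [Units.val_mul, Module.End.mul_apply]
          abel
        rw [he]
        exact Submodule.add_mem _ (ihg _) (ihh _)
    | inv g _ ihg =>
        intro x
        have he : ((g⁻¹ : (Module.End ℝ V)ˣ) : Module.End ℝ V) x - x
            = -((g : Module.End ℝ V) (((g⁻¹ : (Module.End ℝ V)ˣ) : Module.End ℝ V) x)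
                - ((g⁻¹ : (Module.End ℝ V)ˣ) : Module.End ℝ V) x) := by
          rw [CoxeterDatum.unit_apply_inv_apply]
          abel
        rw [he]
        exact Submodule.neg_mem _ (ihg _)
  -- data for each canonical generator
  have hdata : ∀ t ∈ D.canGens W', t ∈ W' ∧ t ∈ D.TSet ∧
      ∃ γ ∈ D.posRoots, (t : Module.End ℝ V) = D.refl γ ∧ γ ∈ P2 := by
    intro t ht
    obtain ⟨htT, htEq⟩ := ht
    have htW' : t ∈ W' := by
      have h1 : t ∈ ({t} : Set (Module.End ℝ V)ˣ) := rfl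
      rw [← htEq] at h1
      exact h1.2
    obtain ⟨γ, hγ, hcoe⟩ := D.tset_exists_posroot htT
    refine ⟨htW', htT, γ, hγ, hcoe, ?_⟩
    have hmv := hmove t (hle htW') γ
    have h2γ : (t : Module.End ℝ V) γ - γ = (-2 : ℝ) • γ := by
      rw [hcoe, D.refl_self (D.root_norm hγ.1)]
      module
    rw [h2γ] at hmv
    have h3 : (-(1/2) : ℝ) • ((-2 : ℝ) • γ) = γ := by
      rw [smul_smul]
      norm_num
    rw [← h3]
    exact Submodule.smul_mem _ _ hmv
  -- the pairwise positivity condition coming from `Nbar`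
  have hpair : ∀ t t' : (Module.End ℝ V)ˣ, t ∈ D.canGens W' → t' ∈ D.canGens W' → t ≠ t' →
      ∀ γ γ' : V, γ ∈ D.posRoots → γ' ∈ D.posRoots → (t : Module.End ℝ V) = D.refl γ →
      (t' : Module.End ℝ V) = D.refl γ' → D.refl γ γ' ∈ PLC D.Pi := by
    intro t t' ht ht' hne γ γ' hγ hγ' hcoe hcoe'
    have ht'W' : t' ∈ W' := ((hdata t' ht')).1
    have htT : t ∈ D.TSet := ht.1
    have ht'T : t' ∈ D.TSet := ht'.1
    have hnotin : t' ∉ D.Nbar t := by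
      intro hmem
      have h1 : t' ∈ D.Nbar t ∩ (W' : Set (Module.End ℝ V)ˣ) := ⟨hmem, ht'W'⟩
      rw [ht.2] at h1
      exact hne (Set.mem_singleton_iff.1 h1).symm
    have hnotlt : ¬ D.len (t * t') < D.len t := fun hlt => hnotin ⟨ht'T, hlt⟩
    have hnotneg : (t : Module.End ℝ V) γ' ∉ D.negRoots := by
      intro hneg
      exact hnotlt (D.strong_exchange (D.tset_mem_wgrp htT) hγ' hcoe' hneg)
    have hroot : (t : Module.End ℝ V) γ' ∈ D.roots :=
      D.root_image (D.tset_mem_wgrp htT) hγ'.1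
    have hpos : (t : Module.End ℝ V) γ' ∈ D.posRoots := by
      rcases D.root_pos_or_neg hroot with h | h
      exacts [h, absurd h hnotneg]
    rw [hcoe] at hpos
    exact hpos.2
  -- the pairwise inner product condition
  have hBba : D.B b a = D.B a b :=
    D.bsymm (D.roots_subset_span hb.1) (D.roots_subset_span ha.1)
  have hBaa : D.B a a = 1 := D.root_norm ha.1
  have hBbb : D.B b b = 1 := D.root_norm hb.1
  have hBexp : ∀ p q p' q' : ℝ, D.B (p • a + q • b) (p' • a + q' • b)
      = p*p' + q*q' + (p*q' + q*p') * D.B a b := by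
    intro p q p' q'
    simp only [map_add, map_smul, LinearMap.add_apply, LinearMap.smul_apply, smul_eq_mul,
      hBaa, hBbb, hBba]
    ring
  have hBpair : ∀ t t' : (Module.End ℝ V)ˣ, t ∈ D.canGens W' → t' ∈ D.canGens W' → t ≠ t' →
      ∀ γ γ' : V, γ ∈ D.posRoots → γ' ∈ D.posRoots → (t : Module.End ℝ V) = D.refl γ →
      (t' : Module.End ℝ V) = D.refl γ' → γ ∈ P2 → γ' ∈ P2 → D.B γ γ' ≤ -1 := by
    intro t t' ht ht' hne γ γ' hγ hγ' hcoe hcoe' hγP2 hγ'P2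
    have h1 := hpair t t' ht ht' hne γ γ' hγ hγ' hcoe hcoe'
    have h2 := hpair t' t ht' ht (Ne.symm hne) γ' γ hγ' hγ hcoe' hcoe
    set μ := D.B γ γ' with hμ
    have hsym : D.B γ' γ = μ :=
      D.bsymm (D.roots_subset_span hγ'.1) (D.roots_subset_span hγ.1)
    obtain ⟨p, q, hcγ⟩ := Submodule.mem_span_pair.1 hγP2
    obtain ⟨p', q', hcγ'⟩ := Submodule.mem_span_pair.1 hγ'P2
    have hu1 : p*p + q*q + (p*q + q*p) * D.B a b = 1 := by
      have h := D.root_norm hγ.1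
      rw [← hcγ, hBexp] at h
      exact h
    have hu2 : p'*p' + q'*q' + (p'*q' + q'*p') * D.B a b = 1 := by
      have h := D.root_norm hγ'.1
      rw [← hcγ', hBexp] at h
      exact h
    have hμeq : μ = p*p' + q*q' + (p*q' + q*p') * D.B a b := by
      rw [hμ, ← hcγ, ← hcγ', hBexp]
    have hsq : 1 ≤ μ^2 := by
      rw [hμeq]
      exact gram_aux hab hu1 hu2
    rcases le_or_gt μ (-1) with h | h
    · exact h
    · exfalso
      have hμ1 : 1 ≤ μ := by nlinarith
      rw [refl_apply, hsym] at h1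
      rw [refl_apply, ← hμ] at h2
      have hz : (γ' - (2*μ) • γ) + ((γ - (2*μ) • γ') + ((2*μ-1) • γ + (2*μ-1) • γ')) = 0 := by
        module
      apply D.zero_not_plc
      rw [← hz]
      exact PLC.add h1 (PLC.add h2 (PLC.combo hγ.2 hγ'.2 (by linarith) (by linarith)
        (Or.inl (by linarith))))
  -- there are no three distinct canonical generators
  have key : ∀ t₁ ∈ D.canGens W', ∀ t₂ ∈ D.canGens W', ∀ t₃ ∈ D.canGens W',
      t₁ = t₂ ∨ t₁ = t₃ ∨ t₂ = t₃ := by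
    intro t₁ h₁ t₂ h₂ t₃ h₃
    by_contra hcon
    push_neg at hcon
    obtain ⟨h12, h13, h23⟩ := hcon
    obtain ⟨hW1, hT1, γ₁, hγ₁, hco₁, hP₁⟩ := hdata t₁ h₁
    obtain ⟨hW2, hT2, γ₂, hγ₂, hco₂, hP₂⟩ := hdata t₂ h₂
    obtain ⟨hW3, hT3, γ₃, hγ₃, hco₃, hP₃⟩ := hdata t₃ h₃
    obtain ⟨p₁, q₁, hc₁⟩ := Submodule.mem_span_pair.1 hP₁
    obtain ⟨p₂, q₂, hc₂⟩ := Submodule.mem_span_pair.1 hP₂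
    obtain ⟨p₃, q₃, hc₃⟩ := Submodule.mem_span_pair.1 hP₃
    set tt := D.B γ₁ γ₂ with htt
    have htt1 : tt ≤ -1 := hBpair t₁ t₂ h₁ h₂ h12 γ₁ γ₂ hγ₁ hγ₂ hco₁ hco₂ hP₁ hP₂
    have h31 : D.B γ₃ γ₁ ≤ -1 := hBpair t₃ t₁ h₃ h₁ (Ne.symm h13) γ₃ γ₁ hγ₃ hγ₁ hco₃ hco₁ hP₃ hP₁
    have h32 : D.B γ₃ γ₂ ≤ -1 := hBpair t₃ t₂ h₃ h₂ (Ne.symm h23) γ₃ γ₂ hγ₃ hγ₂ hco₃ hco₂ hP₃ hP₂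
    have hn₁ : D.B γ₁ γ₁ = 1 := D.root_norm hγ₁.1
    have hn₂ : D.B γ₂ γ₂ = 1 := D.root_norm hγ₂.1
    have hn₃ : D.B γ₃ γ₃ = 1 := D.root_norm hγ₃.1
    have hB21 : D.B γ₂ γ₁ = tt :=
      D.bsymm (D.roots_subset_span hγ₂.1) (D.roots_subset_span hγ₁.1)
    -- γ₁ , γ₂ are linearly independent
    have hdep : ∀ k : ℝ, γ₁ = k • γ₂ → False := by
      intro k hk
      have hBk : tt = k := by
        rw [htt, hk]
        simp only [map_smul, LinearMap.smul_apply, smul_eq_mul]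
        rw [D.bsymm (D.roots_subset_span hγ₂.1) (D.roots_subset_span hγ₂.1)]
        rw [hn₂, mul_one]
      have hBk2 : (1:ℝ) = k * k := by
        conv_lhs => rw [← hn₁]
        rw [hk]
        simp only [map_smul, LinearMap.smul_apply, smul_eq_mul, hn₂]
        ring
      have hkm1 : k = -1 := by nlinarith
      rw [hkm1] at hk
      have h0 : γ₁ + γ₂ = 0 := by rw [hk]; module
      exact D.zero_not_plc (h0 ▸ PLC.add hγ₁.2 hγ₂.2)
    have hd : p₁*q₂ - q₁*p₂ ≠ 0 := by
      intro hd0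
      have hγ₂ne : ¬(p₂ = 0 ∧ q₂ = 0) := by
        rintro ⟨hp0, hq0⟩
        rw [hp0, hq0] at hc₂
        simp only [zero_smul, add_zero] at hc₂
        rw [← hc₂] at hn₂
        simp at hn₂
      by_cases hp₂ : p₂ = 0
      · have hq₂ : q₂ ≠ 0 := fun h => hγ₂ne ⟨hp₂, h⟩
        have hp₁ : p₁ = 0 := by
          rw [hp₂] at hd0
          have : p₁ * q₂ = 0 := by linarith
          rcases mul_eq_zero.1 this with h | h
          exacts [h, absurd h hq₂]
        refine hdep (q₁/q₂) ?_
        rw [← hc₁, ← hc₂, hp₂, hp₁]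
        rw [smul_add, smul_smul, smul_smul]
        rw [mul_zero, div_mul_cancel₀ _ hq₂]
      · refine hdep (p₁/p₂) ?_
        rw [← hc₁, ← hc₂]
        rw [smul_add, smul_smul, smul_smul]
        have hq₁eq : q₁ = (p₁/p₂) * q₂ := by
          field_simp
          linarith
        have hp₁eq : p₁ = (p₁/p₂) * p₂ := by field_simp
        rw [← hp₁eq, ← hq₁eq]
    set lam := (p₃*q₂ - q₃*p₂)/(p₁*q₂ - q₁*p₂) with hlam
    set mu := (p₁*q₃ - q₁*p₃)/(p₁*q₂ - q₁*p₂) with hmu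
    have h3a : lam*p₁ + mu*p₂ = p₃ := by
      rw [hlam, hmu]
      rw [div_mul_eq_mul_div, div_mul_eq_mul_div, ← add_div, div_eq_iff hd]
      ring
    have h3b : lam*q₁ + mu*q₂ = q₃ := by
      rw [hlam, hmu]
      rw [div_mul_eq_mul_div, div_mul_eq_mul_div, ← add_div, div_eq_iff hd]
      ring
    have hγ₃eq : γ₃ = lam • γ₁ + mu • γ₂ := by
      rw [← hc₁, ← hc₂, ← hc₃, ← h3a, ← h3b]
      module
    have hB31' : lam + mu * tt ≤ -1 := by
      have h := h31
      rw [hγ₃eq] at h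
      simp only [map_add, map_smul, LinearMap.add_apply, LinearMap.smul_apply,
        smul_eq_mul] at h
      rw [hn₁, hB21] at h
      linarith
    have hB32' : lam * tt + mu ≤ -1 := by
      have h := h32
      rw [hγ₃eq] at h
      simp only [map_add, map_smul, LinearMap.add_apply, LinearMap.smul_apply,
        smul_eq_mul] at h
      rw [hn₂, ← htt] at h
      linarith
    have hunit3 : lam*lam + mu*mu + 2*(lam*mu)*tt = 1 := by
      have h := hn₃
      rw [hγ₃eq] at h
      simp only [map_add, map_smul, LinearMap.add_apply, LinearMap.smul_apply,
        smul_eq_mul] at h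
      rw [hn₁, hn₂, hB21, ← htt] at h
      linear_combination h
    -- not both nonpositive
    have hlampos : 0 < lam := by
      by_contra hcon
      push_neg at hcon
      have hmuneg : mu ≤ -1 := by
        nlinarith [mul_nonneg (neg_nonneg.2 hcon) (by linarith : (0:ℝ) ≤ -tt)]
      have hneg3 : -γ₃ = (-lam) • γ₁ + (-mu) • γ₂ := by
        rw [hγ₃eq]
        module
      have hmem : -γ₃ ∈ PLC D.Pi := by
        rw [hneg3]
        exact PLC.combo hγ₁.2 hγ₂.2 (by linarith) (by linarith) (Or.inr (by linarith))
      exact D.no_pos_neg hγ₃.2 hmem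
    have hmupos : 0 < mu := by
      by_contra hcon
      push_neg at hcon
      have hlamneg : lam ≤ -1 := by
        nlinarith [mul_nonneg (neg_nonneg.2 hcon) (by linarith : (0:ℝ) ≤ -tt)]
      linarith
    exact dihedral_three_aux htt1 hB31' hB32' hunit3 hlampos hmupos
  -- finish the counting
  rcases Set.eq_empty_or_nonempty (D.canGens W') with hS | ⟨x, hx⟩
  · rw [hS]
    exact ⟨Set.finite_empty, by simp⟩
  · by_cases hsub : D.canGens W' ⊆ {x}
    · have hfin := Set.Finite.subset (Set.finite_singleton x) hsub
      refine ⟨hfin, ?_⟩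
      have := Set.ncard_le_ncard hsub (Set.finite_singleton x)
      simpa using le_trans this (by simp)
    · obtain ⟨y, hy, hyx⟩ : ∃ y ∈ D.canGens W', y ≠ x := by
        by_contra h
        push_neg at h
        exact hsub fun z hz => h z hz
      have hsub2 : D.canGens W' ⊆ {x, y} := by
        intro z hz
        rcases key z hz x hx y hy with h | h | h
        · exact Or.inl h
        · exact Or.inr h
        · exact absurd h.symm hyx
      have hfinxy : ({x, y} : Set (Module.End ℝ V)ˣ).Finite :=
        (Set.finite_singleton y).insert x
      have hfin := Set.Finite.subset hfinxy hsub2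
      refine ⟨hfin, ?_⟩
      calc (D.canGens W').ncard ≤ ({x, y} : Set (Module.End ℝ V)ˣ).ncard :=
            Set.ncard_le_ncard hsub2 hfinxy
        _ ≤ 2 := by
            rw [Set.ncard_pair (Ne.symm hyx)]
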